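/- arXiv:2110.09582 — 5 statements merged into one kernel-verified Lean document; each statement's English description precedes it below -/
import Mathlib

section
/- Let ε > 0 and u ≥ 0. Let (x, s) be a solution of (S) with x(0) ∈ [0,∞)^n and s(0) ∈ [0,1]. Then x(t) ∈ [0,∞)^n for all t ≥ 0; moreover, if there exists 1 ≤ i ≤ n with x_i(0) > 0, then for every t > 0 one has x_j(t) > 0 for every 1 ≤ j ≤ n. -/
open Matrix Filter Set Topology Asymptotics

noncomputable section

/-- The mutation matrix `T` (discrete Neumann Laplacian): `T i j = 1` if `|i-j| = 1`,
diagonal entries `-1` at the ends and `-2` inside (minus number of neighbors), `0` otherwise. -/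
def mutT (n : ℕ) : Matrix (Fin n) (Fin n) ℝ :=
  Matrix.of fun i j =>
    if ((i : ℕ) + 1 = (j : ℕ) ∨ (j : ℕ) + 1 = (i : ℕ)) then 1
    else if i = j then
      -((if 0 < (i : ℕ) then (1 : ℝ) else 0) + (if (i : ℕ) + 1 < n then (1 : ℝ) else 0))
    else 0

/-- Monod kinetics `μ(s) = m s / (a + s)`. -/
def monod (m a s : ℝ) : ℝ := m * s / (a + s)

/-- The largest eigenvalue of a (symmetric) real matrix. -/
def maxEig {n : ℕ} (A : Matrix (Fin n) (Fin n) ℝ) : ℝ :=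
  sSup {t : ℝ | ∃ v : Fin n → ℝ, v ≠ 0 ∧ A.mulVec v = t • v}

/-- The matrix `B(s,u,ε) = diag(μ₁(s),…,μₙ(s)) - u Iₙ + ε T`. -/
def Bmat (n : ℕ) (m a : Fin n → ℝ) (s u ε : ℝ) : Matrix (Fin n) (Fin n) ℝ :=
  Matrix.diagonal (fun i => monod (m i) (a i) s) - u • (1 : Matrix (Fin n) (Fin n) ℝ)
    + ε • mutT n

/-- `(x, s)` is a solution of the chemostat system with mutation (S). -/
def IsSol (n : ℕ) (m a : Fin n → ℝ) (ε u : ℝ) (x : ℝ → Fin n → ℝ) (s : ℝ → ℝ) : Prop :=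
  ∀ t : ℝ, 0 ≤ t →
    (∀ i, HasDerivAt (fun τ => x τ i)
        ((monod (m i) (a i) (s t) - u) * x t i + ε * (mutT n).mulVec (x t) i) t) ∧
    HasDerivAt s (-(∑ j, monod (m j) (a j) (s t) * x t j) + u * (1 - s t)) t

/-- Admissible initial conditions `D = (ℝ₊ⁿ \ {0}) × [0,1]`. -/
def InD (n : ℕ) (x0 : Fin n → ℝ) (s0 : ℝ) : Prop :=
  (∀ i, 0 ≤ x0 i) ∧ x0 ≠ 0 ∧ s0 ∈ Set.Icc (0 : ℝ) 1



lemma mutT_diag_nonpos {n : ℕ} (i : Fin n) : mutT n i i ≤ 0 := by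
  simp only [mutT, Matrix.of_apply]
  split
  · omega
  · rw [if_true]
    have : (0:ℝ) ≤ (if 0 < (i : ℕ) then (1 : ℝ) else 0) + (if (i : ℕ) + 1 < n then (1 : ℝ) else 0) := by
      positivity
    linarith

lemma mutT_diag_ge {n : ℕ} (i : Fin n) : -2 ≤ mutT n i i := by
  simp only [mutT, Matrix.of_apply]
  split
  · norm_num
  · rw [if_true]
    have h1 : (if 0 < (i : ℕ) then (1 : ℝ) else 0) ≤ 1 := by split <;> norm_num
    have h2 : (if (i : ℕ) + 1 < n then (1 : ℝ) else 0) ≤ 1 := by split <;> norm_num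
    linarith

lemma mutT_off_nonneg {n : ℕ} {i j : Fin n} (h : i ≠ j) : 0 ≤ mutT n i j := by
  simp only [mutT, Matrix.of_apply, if_neg h]
  split <;> norm_num

lemma mutT_off_le_one {n : ℕ} {i j : Fin n} (h : i ≠ j) : mutT n i j ≤ 1 := by
  simp only [mutT, Matrix.of_apply, if_neg h]
  split <;> norm_num

lemma mutT_neighbor {n : ℕ} {i j : Fin n} (h : (i : ℕ) + 1 = (j : ℕ) ∨ (j : ℕ) + 1 = (i : ℕ)) :
    mutT n i j = 1 := by
  simp only [mutT, Matrix.of_apply, if_pos h]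

/-- lower bound for mulVec when all coordinates ≥ -δ and i-th is exactly -δ -/
lemma mulVec_lower1 {n : ℕ} (v : Fin n → ℝ) (δ : ℝ) (hδ : 0 ≤ δ)
    (hv : ∀ l, -δ ≤ v l) (i : Fin n) (hvi : v i = -δ) :
    -(n : ℝ) * δ ≤ (mutT n).mulVec v i := by
  rw [Matrix.mulVec, dotProduct]
  rw [← Finset.add_sum_erase _ _ (Finset.mem_univ i)]
  have h1 : 0 ≤ mutT n i i * v i := by
    rw [hvi]
    nlinarith [mutT_diag_nonpos i]
  have h2 : ∀ l ∈ Finset.univ.erase i, -δ ≤ mutT n i l * v l := by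
    intro l hl
    have hli : l ≠ i := Finset.ne_of_mem_erase hl
    have h0 := mutT_off_nonneg (Ne.symm hli)
    have h1' := mutT_off_le_one (Ne.symm hli)
    nlinarith [hv l]
  calc -(n : ℝ) * δ ≤ 0 + ∑ l ∈ Finset.univ.erase i, (-δ) := by
        rw [Finset.sum_const]
        have : (Finset.univ.erase i).card ≤ n := by
          simpa using (Finset.card_erase_le (s:=Finset.univ) (a:=i)).trans (by simp)
        have : ((Finset.univ.erase i).card : ℝ) ≤ (n : ℝ) := by exact_mod_cast this
        rw [nsmul_eq_mul]
        nlinarith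
    _ ≤ mutT n i i * v i + ∑ l ∈ Finset.univ.erase i, mutT n i l * v l := by
        gcongr
        exact h2 _ ‹_›

/-- lower bound for mulVec with nonneg coordinates, keeping one neighbor -/
lemma mulVec_lower2 {n : ℕ} (v : Fin n → ℝ) (hv : ∀ l, 0 ≤ v l) (i k : Fin n)
    (hk : (i : ℕ) + 1 = (k : ℕ) ∨ (k : ℕ) + 1 = (i : ℕ)) :
    -2 * v i + v k ≤ (mutT n).mulVec v i := by
  have hki : k ≠ i := by rcases hk with h | h <;> (intro he; rw [he] at h; omega)
  rw [Matrix.mulVec, dotProduct]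
  rw [← Finset.add_sum_erase _ _ (Finset.mem_univ i)]
  have h1 : -2 * v i ≤ mutT n i i * v i := by
    nlinarith [mutT_diag_ge i, mutT_diag_nonpos i, hv i]
  have h2 : v k ≤ ∑ l ∈ Finset.univ.erase i, mutT n i l * v l := by
    have := Finset.single_le_sum (f := fun l => mutT n i l * v l)
      (fun l hl => mul_nonneg (mutT_off_nonneg (Ne.symm (Finset.ne_of_mem_erase hl))) (hv l))
      (Finset.mem_erase.mpr ⟨hki, Finset.mem_univ k⟩)
    calc v k = 1 * v k := (one_mul _).symm
      _ = mutT n i k * v k := by rw [mutT_neighbor hk]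
      _ ≤ _ := this
  linarith

lemma no_cross (g : ℝ → ℝ) (d t₁ : ℝ) (hd : HasDerivAt g d t₁) (hdpos : 0 < d)
    (ht₁ : 0 < t₁) (hpos : ∀ τ, 0 ≤ τ → τ < t₁ → 0 < g τ) (hg : g t₁ = 0) : False := by
  have hslope := hasDerivAt_iff_tendsto_slope.mp hd
  have h1 : ∀ᶠ τ in 𝓝[<] t₁, 0 < slope g t₁ τ := by
    have : ∀ᶠ τ in 𝓝[≠] t₁, 0 < slope g t₁ τ :=
      hslope.eventually (eventually_gt_nhds hdpos)
    exact this.filter_mono (nhdsWithin_mono _ (fun τ hτ => ne_of_lt hτ))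
  have h2 : ∀ᶠ τ in 𝓝[<] t₁, 0 < τ := by
    apply eventually_nhdsWithin_of_eventually_nhds
    exact eventually_gt_nhds ht₁
  have h3 : ∀ᶠ τ in 𝓝[<] t₁, τ < t₁ := eventually_mem_nhdsWithin.mono (fun τ hτ => hτ)
  obtain ⟨τ, hs, hτ0, hτ1⟩ := (h1.and (h2.and h3)).exists
  have hgτ := hpos τ hτ0.le hτ1
  rw [slope_def_field, hg] at hs
  have hden : τ - t₁ < 0 := by linarith
  rcases div_pos_iff.mp hs with ⟨h1',h2'⟩ | ⟨h1',h2'⟩ <;> linarith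

lemma deriv_lower (g d : ℝ → ℝ) (c a b : ℝ) (hab : a ≤ b)
    (hg : ∀ t ∈ Set.Icc a b, HasDerivAt g (d t) t) (hd : ∀ t ∈ Set.Icc a b, c ≤ d t) :
    c * (b - a) ≤ g b - g a := by
  set h : ℝ → ℝ := fun t => g t - c * t with hh
  have hder : ∀ t ∈ Set.Icc a b, HasDerivAt h (d t - c) t := by
    intro t ht
    have := (hg t ht).sub ((hasDerivAt_id t).const_mul c)
    simp only [id, mul_one] at this
    exact this
  have hmono : MonotoneOn h (Set.Icc a b) := by
    apply monotoneOn_of_deriv_nonneg (convex_Icc a b)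
    · exact fun t ht => (hder t ht).continuousAt.continuousWithinAt
    · intro t ht
      rw [interior_Icc] at ht
      exact (hder t (Set.mem_Icc_of_Ioo ht)).differentiableAt.differentiableWithinAt
    · intro t ht
      rw [interior_Icc] at ht
      rw [(hder t (Set.mem_Icc_of_Ioo ht)).deriv]
      have := hd t (Set.mem_Icc_of_Ioo ht)
      linarith
  have := hmono (Set.left_mem_Icc.mpr hab) (Set.right_mem_Icc.mpr hab) hab
  simp only [hh] at this
  linarith



lemma monod_nonneg {m a r : ℝ} (hm : 0 < m) (ha : 0 < a) (hr : 0 ≤ r) : 0 ≤ monod m a r := by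
  unfold monod; positivity

lemma monod_abs_le {m a r amin mmax : ℝ} (hm : 0 < m) (hamin : 0 < amin)
    (haa : amin ≤ a) (hmm : m ≤ mmax) (hr : -(amin/2) ≤ r) :
    |monod m a r| ≤ 2 * mmax * |r| / amin := by
  have ha : 0 < a + r := by linarith
  have h1 : |monod m a r| = m * |r| / (a + r) := by
    unfold monod
    rw [abs_div, abs_mul, abs_of_pos hm, abs_of_pos ha]
  rw [h1, div_le_div_iff₀ ha hamin]
  have h2 : amin / 2 ≤ a + r := by linarith
  have hmmax : (0:ℝ) ≤ mmax := by linarith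
  have h3 : m * |r| * amin ≤ mmax * |r| * amin := by
    have := mul_le_mul_of_nonneg_right (mul_le_mul_of_nonneg_right hmm (abs_nonneg r)) hamin.le
    linarith
  have h4 : 2 * mmax * |r| * (amin/2) ≤ 2 * mmax * |r| * (a + r) :=
    mul_le_mul_of_nonneg_left h2 (by positivity)
  nlinarith

lemma cont_nonneg_of_pos_before (g : ℝ → ℝ) (t₁ : ℝ) (hg : ContinuousAt g t₁) (ht₁ : 0 < t₁)
    (hpos : ∀ τ, 0 ≤ τ → τ < t₁ → 0 < g τ) : 0 ≤ g t₁ := by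
  by_contra h
  push_neg at h
  have h1 : ∀ᶠ τ in 𝓝[<] t₁, g τ < 0 :=
    eventually_nhdsWithin_of_eventually_nhds (hg.eventually_lt continuousAt_const h)
  have h2 : ∀ᶠ τ in 𝓝[<] t₁, 0 < τ :=
    eventually_nhdsWithin_of_eventually_nhds (eventually_gt_nhds ht₁)
  have h3 : ∀ᶠ τ in 𝓝[<] t₁, τ < t₁ := eventually_mem_nhdsWithin.mono (fun τ hτ => hτ)
  obtain ⟨τ, ha', hb'⟩ := (h1.and (h2.and h3)).exists
  exact absurd (hpos τ hb'.1.le hb'.2) (by linarith)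

lemma hasDerivAt_expK (ε' K t : ℝ) :
    HasDerivAt (fun τ => ε' * Real.exp (K * τ)) (ε' * (K * Real.exp (K * t))) t := by
  have h : HasDerivAt (fun x => Real.exp (K * id x)) (Real.exp (K * id t) * (K * 1)) t :=
    ((hasDerivAt_id t).const_mul K).exp
  simp only [id, mul_one] at h
  simpa [mul_comm] using h.const_mul ε'

lemma mulVec_lower2' {n : ℕ} (v : Fin n → ℝ) (hv : ∀ l, 0 ≤ v l) (i : Fin n) :
    -2 * v i ≤ (mutT n).mulVec v i := by
  rw [Matrix.mulVec, dotProduct]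
  rw [← Finset.add_sum_erase _ _ (Finset.mem_univ i)]
  have h1 : -2 * v i ≤ mutT n i i * v i := by
    nlinarith [mutT_diag_ge i, mutT_diag_nonpos i, hv i]
  have h2 : (0:ℝ) ≤ ∑ l ∈ Finset.univ.erase i, mutT n i l * v l :=
    Finset.sum_nonneg fun l hl =>
      mul_nonneg (mutT_off_nonneg (Ne.symm (Finset.ne_of_mem_erase hl))) (hv l)
  linarith

set_option maxHeartbeats 1600000 in
lemma part1 (n : ℕ) (hn : 1 ≤ n) (m a : Fin n → ℝ)
    (hm : ∀ i, 0 < m i) (ha : ∀ i, 0 < a i)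
    (ε u : ℝ) (hε : 0 < ε) (hu : 0 ≤ u)
    (x : ℝ → Fin n → ℝ) (s : ℝ → ℝ) (hsol : IsSol n m a ε u x s)
    (hx0 : ∀ i, 0 ≤ x 0 i) (hs0 : 0 ≤ s 0) :
    ∀ t, 0 ≤ t → (∀ i, 0 ≤ x t i) ∧ 0 ≤ s t := by
  intro T hT
  have hne : Nonempty (Fin n) := ⟨⟨0, hn⟩⟩
  have hFn : (Finset.univ : Finset (Fin n)).Nonempty := Finset.univ_nonempty
  obtain ⟨amin, hamin, haminle⟩ : ∃ amin, 0 < amin ∧ ∀ i, amin ≤ a i := by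
    refine ⟨Finset.univ.inf' hFn a, ?_, ?_⟩
    · obtain ⟨i, _, hi⟩ := Finset.exists_mem_eq_inf' hFn a
      rw [hi]; exact ha i
    · intro i
      exact Finset.inf'_le a (Finset.mem_univ i)
  obtain ⟨mmax, hmmax0, hmmaxle⟩ : ∃ mmax, 0 < mmax ∧ ∀ i, m i ≤ mmax := by
    refine ⟨Finset.univ.sup' hFn m, ?_, ?_⟩
    · exact lt_of_lt_of_le (hm ⟨0, hn⟩) (Finset.le_sup' m (Finset.mem_univ ⟨0, hn⟩))
    · intro i
      exact Finset.le_sup' m (Finset.mem_univ i)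
  have hcx : ∀ i, ContinuousOn (fun τ => x τ i) (Set.Icc 0 T) := fun i τ hτ =>
    ((hsol τ hτ.1).1 i).continuousAt.continuousWithinAt
  have hcs : ContinuousOn s (Set.Icc 0 T) := fun τ hτ =>
    ((hsol τ hτ.1).2).continuousAt.continuousWithinAt
  obtain ⟨C1, hC10, hC1⟩ : ∃ C1, 0 ≤ C1 ∧ ∀ τ ∈ Set.Icc (0:ℝ) T, ∀ i, |x τ i| ≤ C1 := by
    obtain ⟨C1', hC1'⟩ := (isCompact_Icc (a := (0:ℝ)) (b := T)).exists_bound_of_continuousOn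
      (continuousOn_pi.mpr hcx)
    refine ⟨max C1' 0, le_max_right _ _, fun τ hτ i => ?_⟩
    calc |x τ i| = ‖x τ i‖ := rfl
      _ ≤ ‖x τ‖ := norm_le_pi_norm _ i
      _ ≤ C1' := hC1' τ hτ
      _ ≤ max C1' 0 := le_max_left _ _
  obtain ⟨C2, hC20, hC2⟩ : ∃ C2, 0 ≤ C2 ∧ ∀ τ ∈ Set.Icc (0:ℝ) T, |s τ| ≤ C2 := by
    obtain ⟨C2', hC2'⟩ := (isCompact_Icc (a := (0:ℝ)) (b := T)).exists_bound_of_continuousOn hcs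
    exact ⟨max C2' 0, le_max_right _ _, fun τ hτ =>
      le_trans (hC2' τ hτ) (le_max_left _ _)⟩
  obtain ⟨η, hη_def⟩ : ∃ η : ℝ, η = amin / 2 := ⟨_, rfl⟩
  have hη : 0 < η := by rw [hη_def]; positivity
  obtain ⟨M, hM_def⟩ : ∃ M : ℝ, M = 2 * mmax * (amin + C2) / amin := ⟨_, rfl⟩
  have hM0 : 0 ≤ M := by rw [hM_def]; positivity
  have hMbound : ∀ (i : Fin n) (r : ℝ), -η ≤ r → |r| ≤ C2 → |monod (m i) (a i) r| ≤ M := by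
    intro i r h1 h2
    rw [hη_def] at h1
    refine le_trans (monod_abs_le (hm i) hamin (haminle i) (hmmaxle i) h1) ?_
    rw [hM_def, div_le_div_iff₀ hamin hamin]
    have h3 : |r| ≤ amin + C2 := by linarith
    have h4 := mul_le_mul_of_nonneg_right
      (mul_le_mul_of_nonneg_left h3 (by positivity : (0:ℝ) ≤ 2 * mmax)) hamin.le
    calc 2 * mmax * |r| * amin ≤ 2 * mmax * (amin + C2) * amin := h4
      _ ≤ _ := le_refl _
  obtain ⟨K, hK_def⟩ : ∃ K : ℝ, K = M + u + n * ε + 2 * n * mmax * C1 / amin + 1 := ⟨_, rfl⟩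
  have hK0 : 0 < K := by rw [hK_def]; positivity
  -- the ε' claim
  have claim : ∀ ε', 0 < ε' → ε' * Real.exp (K * T) ≤ η →
      ∀ τ ∈ Set.Icc (0:ℝ) T,
        (∀ i, -(ε' * Real.exp (K * τ)) < x τ i) ∧ -(ε' * Real.exp (K * τ)) < s τ := by
    intro ε' hε' hε'η
    by_contra hbad
    push_neg at hbad
    obtain ⟨δf, hδf_def⟩ : ∃ δf : ℝ → ℝ, δf = fun τ => ε' * Real.exp (K * τ) := ⟨_, rfl⟩
    have hδfpos : ∀ τ, 0 < δf τ := fun τ => by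
      simp only [hδf_def]; positivity
    have hδfc : Continuous δf := by
      simp only [hδf_def]; fun_prop
    obtain ⟨B, hB_def⟩ : ∃ B : Set ℝ, B =
      (⋃ i, (Set.Icc 0 T ∩ (fun τ => x τ i + δf τ) ⁻¹' Set.Iic 0)) ∪
        (Set.Icc 0 T ∩ (fun τ => s τ + δf τ) ⁻¹' Set.Iic 0) := ⟨_, rfl⟩
    have hBmem : ∀ τ, τ ∈ B ↔ (τ ∈ Set.Icc (0:ℝ) T ∧
        ((∃ i, x τ i + δf τ ≤ 0) ∨ s τ + δf τ ≤ 0)) := by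
      intro τ
      rw [hB_def]
      constructor
      · intro h
        rcases h with h | h
        · obtain ⟨i, hi⟩ := Set.mem_iUnion.mp h
          exact ⟨hi.1, Or.inl ⟨i, hi.2⟩⟩
        · exact ⟨h.1, Or.inr h.2⟩
      · rintro ⟨hIcc, (⟨i, hi⟩ | hs)⟩
        · exact Or.inl (Set.mem_iUnion.mpr ⟨i, ⟨hIcc, hi⟩⟩)
        · exact Or.inr ⟨hIcc, hs⟩
    have hBsub : B ⊆ Set.Icc 0 T := fun τ hτ => ((hBmem τ).mp hτ).1
    have hBne : B.Nonempty := by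
      obtain ⟨τ₀, hτ₀, hτ₀'⟩ := hbad
      have hδτ₀ : δf τ₀ = ε' * Real.exp (K * τ₀) := by rw [hδf_def]
      have hτ₀'' : (∀ i, -δf τ₀ < x τ₀ i) → s τ₀ ≤ -δf τ₀ := by
        rw [hδτ₀]; exact hτ₀'
      refine ⟨τ₀, (hBmem τ₀).mpr ⟨hτ₀, ?_⟩⟩
      by_cases h : ∀ i, -(δf τ₀) < x τ₀ i
      · right; linarith [hτ₀'' h]
      · left; push_neg at h; obtain ⟨i, hi⟩ := h; exact ⟨i, by linarith⟩

    have hBclosed : IsClosed B := by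
      rw [hB_def]
      apply IsClosed.union
      · apply isClosed_iUnion_of_finite
        intro i
        exact ((hcx i).add hδfc.continuousOn).preimage_isClosed_of_isClosed
          isClosed_Icc isClosed_Iic
      · exact (hcs.add hδfc.continuousOn).preimage_isClosed_of_isClosed
          isClosed_Icc isClosed_Iic
    have hBbdd : BddBelow B := ⟨0, fun τ hτ => (hBsub hτ).1⟩
    obtain ⟨t₁, ht₁_def⟩ : ∃ t₁ : ℝ, t₁ = sInf B := ⟨_, rfl⟩
    have ht₁B : t₁ ∈ B := by rw [ht₁_def]; exact hBclosed.csInf_mem hBne hBbdd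
    have ht₁Icc : t₁ ∈ Set.Icc (0:ℝ) T := hBsub ht₁B
    have hbefore : ∀ τ, 0 ≤ τ → τ < t₁ → (∀ i, 0 < x τ i + δf τ) ∧ 0 < s τ + δf τ := by
      intro τ h0 hlt
      by_contra hc
      have hmem : τ ∈ B := by
        refine (hBmem τ).mpr ⟨⟨h0, le_trans hlt.le ht₁Icc.2⟩, ?_⟩
        by_contra hno
        push_neg at hno
        exact hc ⟨fun i => by linarith [hno.1 i], by linarith [hno.2]⟩
      have h9 : sInf B ≤ τ := csInf_le hBbdd hmem
      rw [← ht₁_def] at h9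
      exact absurd h9 (not_le.mpr hlt)
    have ht₁pos : 0 < t₁ := by
      rcases lt_or_eq_of_le ht₁Icc.1 with h | h
      · exact h
      · exfalso
        obtain ⟨-, hcase0⟩ := (hBmem t₁).mp ht₁B
        rw [← h] at hcase0
        have hδ0 : 0 < δf 0 := hδfpos 0
        rcases hcase0 with ⟨i, hi⟩ | hs
        · linarith [hx0 i]
        · linarith
    have hcxt : ∀ i, ContinuousAt (fun τ => x τ i + δf τ) t₁ :=
      fun i => (((hsol t₁ ht₁Icc.1).1 i).continuousAt).add hδfc.continuousAt
    have hcst : ContinuousAt (fun τ => s τ + δf τ) t₁ :=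
      ((hsol t₁ ht₁Icc.1).2).continuousAt.add hδfc.continuousAt
    have hallge : ∀ l, -(δf t₁) ≤ x t₁ l := by
      intro l
      have := cont_nonneg_of_pos_before _ t₁ (hcxt l) ht₁pos
        (fun τ h0 hlt => (hbefore τ h0 hlt).1 l)
      linarith
    have hsge : -(δf t₁) ≤ s t₁ := by
      have := cont_nonneg_of_pos_before _ t₁ hcst ht₁pos
        (fun τ h0 hlt => (hbefore τ h0 hlt).2)
      linarith
    have hδpos : 0 < δf t₁ := hδfpos t₁
    have hδη : δf t₁ ≤ η := by
      have h1 : Real.exp (K * t₁) ≤ Real.exp (K * T) :=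
        Real.exp_le_exp.mpr (mul_le_mul_of_nonneg_left ht₁Icc.2 hK0.le)
      have h2 : ε' * Real.exp (K * t₁) ≤ ε' * Real.exp (K * T) :=
        mul_le_mul_of_nonneg_left h1 hε'.le
      have h3 : δf t₁ = ε' * Real.exp (K * t₁) := by rw [hδf_def]
      linarith
    have hsC2 := hC2 t₁ ht₁Icc
    obtain ⟨-, hcase⟩ := (hBmem t₁).mp ht₁B
    have hexpd : ε' * (K * Real.exp (K * t₁)) = K * δf t₁ := by
      simp only [hδf_def]; ring
    have hderx : ∀ i, HasDerivAt (fun τ => x τ i + δf τ)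
        (((monod (m i) (a i) (s t₁) - u) * x t₁ i + ε * (mutT n).mulVec (x t₁) i)
          + ε' * (K * Real.exp (K * t₁))) t₁ := fun i => by
      simp only [hδf_def]
      exact ((hsol t₁ ht₁Icc.1).1 i).add (hasDerivAt_expK ε' K t₁)
    have hders : HasDerivAt (fun τ => s τ + δf τ)
        ((-(∑ j, monod (m j) (a j) (s t₁) * x t₁ j) + u * (1 - s t₁))
          + ε' * (K * Real.exp (K * t₁))) t₁ := by
      simp only [hδf_def]
      exact ((hsol t₁ ht₁Icc.1).2).add (hasDerivAt_expK ε' K t₁)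
    rcases hcase with ⟨i, hi⟩ | hs
    · -- species crossing
      have hxi : x t₁ i = -(δf t₁) := le_antisymm (by linarith) (hallge i)
      have hμM : |monod (m i) (a i) (s t₁)| ≤ M := hMbound i _ (by linarith) hsC2
      have hmv : -(n : ℝ) * δf t₁ ≤ (mutT n).mulVec (x t₁) i :=
        mulVec_lower1 _ (δf t₁) hδpos.le hallge i hxi
      have hdpos : 0 < ((monod (m i) (a i) (s t₁) - u) * x t₁ i
          + ε * (mutT n).mulVec (x t₁) i) + ε' * (K * Real.exp (K * t₁)) := by
        rw [hexpd, hxi]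
        have habs := abs_le.mp hμM
        have e2a : monod (m i) (a i) (s t₁) * δf t₁ ≤ M * δf t₁ :=
          mul_le_mul_of_nonneg_right habs.2 hδpos.le
        have e2b : 0 ≤ u * δf t₁ := mul_nonneg hu hδpos.le
        have e3 : ε * (-(n : ℝ) * δf t₁) ≤ ε * (mutT n).mulVec (x t₁) i :=
          mul_le_mul_of_nonneg_left hmv hε.le
        have e5 : (M + u + (n : ℝ) * ε + 1) * δf t₁ ≤ K * δf t₁ := by
          apply mul_le_mul_of_nonneg_right _ hδpos.le
          rw [hK_def]
          have : (0:ℝ) ≤ 2 * n * mmax * C1 / amin := by positivity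
          linarith
        nlinarith [e2a, e2b, e3, e5, hδpos]
      exact no_cross _ _ t₁ (hderx i) hdpos ht₁pos
        (fun τ h0 hlt => (hbefore τ h0 hlt).1 i)
        (by show x t₁ i + δf t₁ = 0; rw [hxi]; ring)
    · -- substrate crossing
      have hst : s t₁ = -(δf t₁) := le_antisymm (by linarith) hsge
      have hsum : |∑ j, monod (m j) (a j) (s t₁) * x t₁ j|
          ≤ (n : ℝ) * (2 * mmax * δf t₁ / amin * C1) := by
        calc |∑ j, monod (m j) (a j) (s t₁) * x t₁ j|
            ≤ ∑ j, |monod (m j) (a j) (s t₁) * x t₁ j| := Finset.abs_sum_le_sum_abs _ _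
          _ ≤ ∑ _j : Fin n, (2 * mmax * δf t₁ / amin * C1) := by
              apply Finset.sum_le_sum
              intro j _
              rw [abs_mul]
              have h1 : |monod (m j) (a j) (s t₁)| ≤ 2 * mmax * δf t₁ / amin := by
                have h0 := monod_abs_le (hm j) (r := s t₁) hamin (haminle j) (hmmaxle j)
                  (by rw [hst]; rw [hη_def] at hδη; linarith)
                rw [hst, abs_neg, abs_of_pos hδpos] at h0
                rw [hst]; exact h0
              have h2 : |x t₁ j| ≤ C1 := hC1 t₁ ht₁Icc j
              have h3 : (0:ℝ) ≤ 2 * mmax * δf t₁ / amin := by positivity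
              exact mul_le_mul h1 h2 (abs_nonneg _) h3
          _ = (n : ℝ) * (2 * mmax * δf t₁ / amin * C1) := by
              rw [Finset.sum_const, Finset.card_univ, Fintype.card_fin, nsmul_eq_mul]
      have hdpos : 0 < (-(∑ j, monod (m j) (a j) (s t₁) * x t₁ j) + u * (1 - s t₁))
          + ε' * (K * Real.exp (K * t₁)) := by
        rw [hexpd]
        have habs := abs_le.mp hsum
        have hu1 : 0 ≤ u * (1 - s t₁) := by
          apply mul_nonneg hu; rw [hst]; linarith
        have e5 : (2 * (n:ℝ) * mmax * C1 / amin + 1) * δf t₁ ≤ K * δf t₁ := by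
          apply mul_le_mul_of_nonneg_right _ hδpos.le
          rw [hK_def]
          have h1 : (0:ℝ) ≤ (n:ℝ) * ε := by positivity
          linarith
        have heq : (n:ℝ) * (2 * mmax * δf t₁ / amin * C1)
            = (2 * (n:ℝ) * mmax * C1 / amin) * δf t₁ := by
          field_simp
        have h7 : (∑ j, monod (m j) (a j) (s t₁) * x t₁ j)
            ≤ 2 * (n:ℝ) * mmax * C1 / amin * δf t₁ := by rw [← heq]; exact habs.2
        linarith only [e5, hu1, hδpos, h7]
      exact no_cross _ _ t₁ hders hdpos ht₁pos
        (fun τ h0 hlt => (hbefore τ h0 hlt).2)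
        (by show s t₁ + δf t₁ = 0; rw [hst]; ring)
  -- conclude
  have hTIcc : T ∈ Set.Icc (0:ℝ) T := ⟨hT, le_refl T⟩
  have hexppos : 0 < Real.exp (K * T) := Real.exp_pos _
  have key : ∀ ρ : ℝ, 0 < ρ → (∀ i, -ρ < x T i) ∧ -ρ < s T := by
    intro ρ hρ
    have hε'pos : 0 < min (η / Real.exp (K * T)) (ρ / Real.exp (K * T)) :=
      lt_min (by positivity) (by positivity)
    have h1 : min (η / Real.exp (K * T)) (ρ / Real.exp (K * T)) * Real.exp (K * T) ≤ η := by
      calc _ ≤ (η / Real.exp (K * T)) * Real.exp (K * T) :=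
            mul_le_mul_of_nonneg_right (min_le_left _ _) hexppos.le
        _ = η := div_mul_cancel₀ _ hexppos.ne'
    have h2 : min (η / Real.exp (K * T)) (ρ / Real.exp (K * T)) * Real.exp (K * T) ≤ ρ := by
      calc _ ≤ (ρ / Real.exp (K * T)) * Real.exp (K * T) :=
            mul_le_mul_of_nonneg_right (min_le_right _ _) hexppos.le
        _ = ρ := div_mul_cancel₀ _ hexppos.ne'
    obtain ⟨hx', hs'⟩ := claim _ hε'pos h1 T hTIcc
    exact ⟨fun i => lt_of_le_of_lt (by linarith) (hx' i), lt_of_le_of_lt (by linarith) hs'⟩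
  constructor
  · intro i
    by_contra h
    push_neg at h
    have := (key (-(x T i) / 2) (by linarith)).1 i
    linarith
  · by_contra h
    push_neg at h
    have := (key (-(s T) / 2) (by linarith)).2
    linarith

set_option maxHeartbeats 1600000 in
lemma part2 (n : ℕ) (hn : 1 ≤ n) (m a : Fin n → ℝ)
    (hm : ∀ i, 0 < m i) (ha : ∀ i, 0 < a i)
    (ε u : ℝ) (hε : 0 < ε) (hu : 0 ≤ u)
    (x : ℝ → Fin n → ℝ) (s : ℝ → ℝ) (hsol : IsSol n m a ε u x s)
    (hnn : ∀ t, 0 ≤ t → (∀ i, 0 ≤ x t i) ∧ 0 ≤ s t) :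
    (∃ i, 0 < x 0 i) → ∀ t, 0 < t → ∀ j, 0 < x t j := by
  intro ⟨i, hi⟩ t ht j
  obtain ⟨K, hK_def⟩ : ∃ K : ℝ, K = u + 2 * ε := ⟨_, rfl⟩
  have hK0 : 0 < K := by rw [hK_def]; positivity
  obtain ⟨y, hy_def⟩ : ∃ y : Fin n → ℝ → ℝ,
      y = fun j τ => Real.exp (K * τ) * x τ j := ⟨_, rfl⟩
  have hyval : ∀ j τ, y j τ = Real.exp (K * τ) * x τ j := fun j τ => by rw [hy_def]
  have hynn : ∀ j τ, 0 ≤ τ → 0 ≤ y j τ := by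
    intro j τ hτ
    rw [hyval]
    exact mul_nonneg (Real.exp_pos _).le ((hnn τ hτ).1 j)
  have hxy : ∀ j τ, 0 < y j τ → 0 < x τ j := by
    intro j τ hy
    rw [hyval] at hy
    by_contra hc
    push_neg at hc
    nlinarith [Real.exp_pos (K * τ)]
  -- derivative of y j
  have hyd : ∀ (j : Fin n) (τ : ℝ), 0 ≤ τ → HasDerivAt (y j)
      (Real.exp (K * τ) * (((monod (m j) (a j) (s τ) - u) * x τ j
        + ε * (mutT n).mulVec (x τ) j) + K * x τ j)) τ := by
    intro j τ hτ
    rw [hy_def]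
    have he : HasDerivAt (fun r => Real.exp (K * r)) (1 * (K * Real.exp (K * τ))) τ := by
      simpa using hasDerivAt_expK 1 K τ
    have hx' := (hsol τ hτ).1 j
    have := he.mul hx'
    exact this.congr_deriv (by ring)
  -- lower bound on the derivative of y j with neighbor k
  have hdlow : ∀ (j k : Fin n), ((j : ℕ) + 1 = (k : ℕ) ∨ (k : ℕ) + 1 = (j : ℕ)) →
      ∀ τ, 0 ≤ τ → ε * y k τ ≤
      Real.exp (K * τ) * (((monod (m j) (a j) (s τ) - u) * x τ j
        + ε * (mutT n).mulVec (x τ) j) + K * x τ j) := by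
    intro j k hjk τ hτ
    have hxnn := (hnn τ hτ).1
    have hμ : 0 ≤ monod (m j) (a j) (s τ) := monod_nonneg (hm j) (ha j) (hnn τ hτ).2
    have hmv := mulVec_lower2 (x τ) hxnn j k hjk
    have hexp : 0 < Real.exp (K * τ) := Real.exp_pos _
    have hinner : ε * x τ k ≤ ((monod (m j) (a j) (s τ) - u) * x τ j
        + ε * (mutT n).mulVec (x τ) j) + K * x τ j := by
      have h1 : ε * (-2 * x τ j + x τ k) ≤ ε * (mutT n).mulVec (x τ) j :=
        mul_le_mul_of_nonneg_left hmv hε.le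
      have h2 : 0 ≤ monod (m j) (a j) (s τ) * x τ j := mul_nonneg hμ (hxnn j)
      rw [hK_def]
      nlinarith [hxnn j]
    rw [hyval]
    calc ε * (Real.exp (K * τ) * x τ k) = Real.exp (K * τ) * (ε * x τ k) := by ring
      _ ≤ _ := mul_le_mul_of_nonneg_left hinner hexp.le
  -- monotonicity of y j
  have hmono : ∀ (j : Fin n) (t' t : ℝ), 0 ≤ t' → t' ≤ t → y j t' ≤ y j t := by
    intro j t' t h0 h1
    have := deriv_lower (y j) (fun τ => Real.exp (K * τ) * (((monod (m j) (a j) (s τ) - u) * x τ j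
        + ε * (mutT n).mulVec (x τ) j) + K * x τ j)) 0 t' t h1
      (fun τ hτ => hyd j τ (le_trans h0 hτ.1)) ?_
    · linarith
    · intro τ hτ
      have h2 : 0 ≤ τ := le_trans h0 hτ.1
      have hxnn := (hnn τ h2).1
      have hμ : 0 ≤ monod (m j) (a j) (s τ) := monod_nonneg (hm j) (ha j) (hnn τ h2).2
      have hmv := mulVec_lower2' (x τ) hxnn j
      have hexp : 0 < Real.exp (K * τ) := Real.exp_pos _
      have hinner : 0 ≤ ((monod (m j) (a j) (s τ) - u) * x τ j
          + ε * (mutT n).mulVec (x τ) j) + K * x τ j := by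
        have h1 : ε * (-2 * x τ j) ≤ ε * (mutT n).mulVec (x τ) j :=
          mul_le_mul_of_nonneg_left hmv hε.le
        have h3 : 0 ≤ monod (m j) (a j) (s τ) * x τ j := mul_nonneg hμ (hxnn j)
        rw [hK_def]
        nlinarith [hxnn j]
      positivity
  -- positivity propagates
  have hpush : ∀ (j k : Fin n), ((j : ℕ) + 1 = (k : ℕ) ∨ (k : ℕ) + 1 = (j : ℕ)) →
      ∀ t' t : ℝ, 0 ≤ t' → t' < t → 0 < x t' k → 0 < x t j := by
    intro j k hjk t' t h0 h1 hk
    apply hxy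
    have hyk : 0 < y k t' := by
      rw [hyval]; positivity
    have := deriv_lower (y j) (fun τ => Real.exp (K * τ) * (((monod (m j) (a j) (s τ) - u) * x τ j
        + ε * (mutT n).mulVec (x τ) j) + K * x τ j)) (ε * y k t') t' t h1.le
      (fun τ hτ => hyd j τ (le_trans h0 hτ.1)) ?_
    · have hjnn := hynn j t' h0
      nlinarith [mul_pos (mul_pos hε hyk) (sub_pos.mpr h1)]
    · intro τ hτ
      refine le_trans ?_ (hdlow j k hjk τ (le_trans h0 hτ.1))
      exact mul_le_mul_of_nonneg_left (hmono k t' τ h0 hτ.1) hε.le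
  have hbase : ∀ t : ℝ, 0 < t → 0 < x t i := by
    intro t ht
    apply hxy
    have h1 := hmono i 0 t le_rfl ht.le
    have h2 : y i 0 = x 0 i := by rw [hyval]; simp
    linarith
  -- induction on distance
  have hmain : ∀ d : ℕ, ∀ j : Fin n, ((j : ℕ) + d = (i : ℕ) ∨ (i : ℕ) + d = (j : ℕ)) →
      ∀ t : ℝ, 0 < t → 0 < x t j := by
    intro d
    induction d with
    | zero =>
      intro j hj t ht
      have : j = i := Fin.ext (by omega)
      rw [this]; exact hbase t ht
    | succ d ih =>
      intro j hj t ht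
      rcases hj with h | h
      · have hk : (j : ℕ) + 1 < n := by have := i.isLt; omega
        set k : Fin n := ⟨(j : ℕ) + 1, hk⟩ with hk_def
        have hik : (k : ℕ) + d = (i : ℕ) := by simp [hk_def]; omega
        have hxk := ih k (Or.inl hik) (t / 2) (by linarith)
        exact hpush j k (Or.inl rfl) (t / 2) t (by linarith) (by linarith) hxk
      · have hj0 : 0 < (j : ℕ) := by omega
        have hkn : (j : ℕ) - 1 < n := by have := j.isLt; omega
        set k : Fin n := ⟨(j : ℕ) - 1, hkn⟩ with hk_def
        have hik : (i : ℕ) + d = (k : ℕ) := by simp [hk_def]; omega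
        have hxk := ih k (Or.inr hik) (t / 2) (by linarith)
        exact hpush j k (Or.inr (by simp [hk_def]; omega)) (t / 2) t (by linarith)
          (by linarith) hxk
  rcases le_total ((j : ℕ)) ((i : ℕ)) with h | h
  · exact hmain ((i : ℕ) - (j : ℕ)) j (Or.inl (by omega)) t ht
  · exact hmain ((j : ℕ) - (i : ℕ)) j (Or.inr (by omega)) t ht

/-- nonnegativity of species concentrations, and positivity of every species
for positive times as soon as one species is initially present. -/
theorem stmt_1 (n : ℕ) (hn : 1 ≤ n) (m a : Fin n → ℝ)
    (hm : ∀ i, 0 < m i) (ha : ∀ i, 0 < a i)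
    (ε u : ℝ) (hε : 0 < ε) (hu : 0 ≤ u)
    (x : ℝ → Fin n → ℝ) (s : ℝ → ℝ) (hsol : IsSol n m a ε u x s)
    (hx0 : ∀ i, 0 ≤ x 0 i) (hs0 : s 0 ∈ Set.Icc (0 : ℝ) 1) :
    (∀ t, 0 ≤ t → ∀ i, 0 ≤ x t i) ∧
    ((∃ i, 0 < x 0 i) → ∀ t, 0 < t → ∀ j, 0 < x t j) := by
  have hP1 := part1 n hn m a hm ha ε u hε hu x s hsol hx0 hs0.1
  refine ⟨fun t ht i => (hP1 t ht).1 i, ?_⟩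
  exact part2 n hn m a hm ha ε u hε hu x s hsol hP1
end
end

section
/- Let ε > 0 and u > 0 be such that λ(B(1, u, ε)) > 0. Then there exists a unique s* ∈ (0,1) with λ(B(s*, u, ε)) = 0, and there exists a unique x* ∈ (0,∞)^n satisfying B(s*, u, ε) x* = 0 and Σ_{j=1}^n x*_j + s* = 1. Moreover, the only steady states of (S) in ℝ_+^n × [0,1] are the washout E_wo = (0,…,0,1) and the coexistence point (x*, s*). -/
open Matrix Filter Set Topology Asymptotics

noncomputable section

/-- `(x, s)` is a steady state of (S). -/
def IsSteady (n : ℕ) (m a : Fin n → ℝ) (ε u : ℝ) (x : Fin n → ℝ) (s : ℝ) : Prop :=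
  (Bmat n m a s u ε).mulVec x = 0 ∧ ∑ j, monod (m j) (a j) s * x j = u * (1 - s)



namespace Toolkit

variable {n : ℕ} {A : Matrix (Fin n) (Fin n) ℝ}

lemma eigBasis_mem (hA : A.IsHermitian) (j : Fin n) :
    (⇑(hA.eigenvectorBasis j) : Fin n → ℝ) ≠ 0 ∧
      A.mulVec (hA.eigenvectorBasis j) = hA.eigenvalues j • ⇑(hA.eigenvectorBasis j) := by
  refine ⟨?_, hA.mulVec_eigenvectorBasis j⟩
  have := hA.eigenvectorBasis.orthonormal.ne_zero j
  intro h
  apply this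
  ext i
  exact congrFun h i

/-- the shifted matrix is PSD -/
lemma psd_shift (hn : 0 < n) (hA : A.IsHermitian) :
    ((Finset.univ.sup' (Finset.univ_nonempty_iff.2 ⟨⟨0, hn⟩⟩) hA.eigenvalues) • (1 : Matrix (Fin n) (Fin n) ℝ) - A).PosSemidef := by
  set c := Finset.univ.sup' (Finset.univ_nonempty_iff.2 ⟨⟨0, hn⟩⟩) hA.eigenvalues with hc
  have hU : (hA.eigenvectorUnitary : Matrix (Fin n) (Fin n) ℝ) *
      (star (hA.eigenvectorUnitary : Matrix (Fin n) (Fin n) ℝ)) = 1 := by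
    exact Matrix.mem_unitaryGroup_iff.mp hA.eigenvectorUnitary.2
  have hform : c • (1 : Matrix (Fin n) (Fin n) ℝ) - A =
      (hA.eigenvectorUnitary : Matrix (Fin n) (Fin n) ℝ) *
        Matrix.diagonal (fun i => c - hA.eigenvalues i) *
        (star (hA.eigenvectorUnitary : Matrix (Fin n) (Fin n) ℝ)) := by
    have h1 : Matrix.diagonal (fun i : Fin n => c - hA.eigenvalues i) =
        c • (1 : Matrix (Fin n) (Fin n) ℝ) - Matrix.diagonal (RCLike.ofReal ∘ hA.eigenvalues) := by
      ext i j
      by_cases h : i = j <;> simp [Matrix.diagonal, h, Matrix.one_apply]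
    rw [h1, Matrix.mul_sub, Matrix.sub_mul]
    congr 1
    · rw [Matrix.mul_smul, Matrix.mul_one, Matrix.smul_mul, hU]
    · exact hA.spectral_theorem
  rw [hform]
  refine Matrix.PosSemidef.mul_mul_conjTranspose_same ?_ _
  refine Matrix.posSemidef_diagonal_iff.mpr fun i => ?_
  simp only [sub_nonneg, hc]
  exact Finset.le_sup' _ (Finset.mem_univ i)

lemma maxEig_eq_sup' (hn : 0 < n) (hA : A.IsHermitian) :
    maxEig A = Finset.univ.sup' (Finset.univ_nonempty_iff.2 ⟨⟨0, hn⟩⟩) hA.eigenvalues := by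
  set c := Finset.univ.sup' (Finset.univ_nonempty_iff.2 ⟨⟨0, hn⟩⟩) hA.eigenvalues with hc
  have hub : ∀ t ∈ {t : ℝ | ∃ v : Fin n → ℝ, v ≠ 0 ∧ A.mulVec v = t • v}, t ≤ c := by
    rintro t ⟨v, hv, hAv⟩
    have hpsd := psd_shift hn hA
    have h2 := hpsd.dotProduct_mulVec_nonneg v
    rw [star_trivial] at h2
    have h3 : (c • (1 : Matrix (Fin n) (Fin n) ℝ) - A) *ᵥ v = c • v - t • v := by
      rw [Matrix.sub_mulVec, hAv, Matrix.smul_mulVec, Matrix.one_mulVec]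
    rw [h3] at h2
    have h4 : dotProduct v (c • v - t • v) = (c - t) * dotProduct v v := by
      simp only [dotProduct_sub, dotProduct_smul, smul_eq_mul, sub_mul]
    rw [h4] at h2
    have hvv : 0 < dotProduct v v := by
      rcases (dotProduct_self_eq_zero (v := v)).ne.mpr hv with h
      have := Finset.sum_nonneg (fun i (_ : i ∈ Finset.univ) => mul_self_nonneg (v i))
      have : 0 ≤ dotProduct v v := this
      cases lt_or_eq_of_le this with
      | inl h' => exact h'
      | inr h' => exact absurd h'.symm h
    nlinarith
  obtain ⟨j, hj⟩ : ∃ j, hA.eigenvalues j = c := by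
    obtain ⟨j, _, hj⟩ := Finset.exists_mem_eq_sup' (Finset.univ_nonempty_iff.2 ⟨⟨0, hn⟩⟩) hA.eigenvalues
    exact ⟨j, hj.symm⟩
  have hmem : c ∈ {t : ℝ | ∃ v : Fin n → ℝ, v ≠ 0 ∧ A.mulVec v = t • v} := by
    obtain ⟨h1, h2⟩ := eigBasis_mem hA j
    refine ⟨_, h1, ?_⟩
    rw [hj] at h2
    exact h2
  exact le_antisymm (csSup_le ⟨c, hmem⟩ hub) (le_csSup ⟨c, hub⟩ hmem)

lemma exists_maxEig_vec (hn : 0 < n) (hA : A.IsHermitian) :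
    ∃ v : Fin n → ℝ, v ≠ 0 ∧ A.mulVec v = maxEig A • v := by
  rw [maxEig_eq_sup' hn hA]
  obtain ⟨j, _, hj⟩ := Finset.exists_mem_eq_sup' (Finset.univ_nonempty_iff.2 ⟨⟨0, hn⟩⟩) hA.eigenvalues
  obtain ⟨h1, h2⟩ := eigBasis_mem hA j
  rw [← hj] at h2
  exact ⟨_, h1, h2⟩

lemma psd_shift' (hn : 0 < n) (hA : A.IsHermitian) :
    ((maxEig A) • (1 : Matrix (Fin n) (Fin n) ℝ) - A).PosSemidef := by
  rw [maxEig_eq_sup' hn hA]; exact psd_shift hn hA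

lemma rayleigh_le (hn : 0 < n) (hA : A.IsHermitian) (v : Fin n → ℝ) :
    dotProduct v (A.mulVec v) ≤ maxEig A * dotProduct v v := by
  have h2 := (psd_shift' hn hA).dotProduct_mulVec_nonneg v
  rw [star_trivial, Matrix.sub_mulVec, dotProduct_sub, Matrix.smul_mulVec,
    Matrix.one_mulVec, dotProduct_smul] at h2
  simp only [smul_eq_mul] at h2
  linarith

lemma eig_le_maxEig (hn : 0 < n) (hA : A.IsHermitian) {t : ℝ} {v : Fin n → ℝ}
    (hv : v ≠ 0) (hAv : A.mulVec v = t • v) : t ≤ maxEig A := by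
  have h := rayleigh_le hn hA v
  rw [hAv, dotProduct_smul] at h
  have hvv : 0 < dotProduct v v :=
    lt_of_le_of_ne (Finset.sum_nonneg fun i _ => mul_self_nonneg (v i))
      (Ne.symm ((dotProduct_self_eq_zero (v := v)).ne.mpr hv))
  simp only [smul_eq_mul] at h
  nlinarith

lemma maximizer_is_eig (hn : 0 < n) (hA : A.IsHermitian) {v : Fin n → ℝ}
    (h : dotProduct v (A.mulVec v) = maxEig A * dotProduct v v) :
    A.mulVec v = maxEig A • v := by
  have hpsd := psd_shift' hn hA
  obtain ⟨B, hB⟩ : ∃ B : Matrix (Fin n) (Fin n) ℝ, _ = Bᴴ * B := by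
    open scoped MatrixOrder in exact CStarAlgebra.nonneg_iff_eq_star_mul_self.mp hpsd.nonneg
  have hq : dotProduct v (((maxEig A) • (1 : Matrix (Fin n) (Fin n) ℝ) - A) *ᵥ v) = 0 := by
    rw [Matrix.sub_mulVec, dotProduct_sub, Matrix.smul_mulVec,
      Matrix.one_mulVec, dotProduct_smul, h]
    simp [smul_eq_mul]
  have hkey : dotProduct v ((Bᴴ * B) *ᵥ v) = dotProduct (B *ᵥ v) (B *ᵥ v) := by
    rw [Matrix.conjTranspose_eq_transpose_of_trivial, ← Matrix.mulVec_mulVec,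
      Matrix.dotProduct_mulVec, Matrix.vecMul_transpose]
  have hBv : B *ᵥ v = 0 := by
    refine dotProduct_self_eq_zero.mp ?_
    rw [← hkey, ← hB, hq]
  have hMv : ((maxEig A) • (1 : Matrix (Fin n) (Fin n) ℝ) - A) *ᵥ v = 0 := by
    rw [hB, ← Matrix.mulVec_mulVec, hBv, Matrix.mulVec_zero]
  rw [Matrix.sub_mulVec, Matrix.smul_mulVec, Matrix.one_mulVec, sub_eq_zero] at hMv
  exact hMv.symm



variable {n : ℕ}

lemma mutT_symm (i j : Fin n) : mutT n i j = mutT n j i := by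
  unfold mutT
  simp only [Matrix.of_apply]
  by_cases h1 : ((i : ℕ) + 1 = (j : ℕ) ∨ (j : ℕ) + 1 = (i : ℕ))
  · rw [if_pos h1, if_pos (Or.symm h1)]
  · rw [if_neg h1, if_neg (fun h => h1 (Or.symm h))]
    by_cases h2 : i = j
    · subst h2; simp
    · rw [if_neg h2, if_neg (fun h => h2 h.symm)]

lemma mutT_offdiag_nonneg (i j : Fin n) (h : i ≠ j) : 0 ≤ mutT n i j := by
  unfold mutT
  simp only [Matrix.of_apply]
  by_cases h1 : ((i : ℕ) + 1 = (j : ℕ) ∨ (j : ℕ) + 1 = (i : ℕ))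
  · rw [if_pos h1]; exact zero_le_one
  · rw [if_neg h1, if_neg h]

def degT (n : ℕ) (i : Fin n) : ℝ :=
  (if 0 < (i : ℕ) then (1 : ℝ) else 0) + (if (i : ℕ) + 1 < n then (1 : ℝ) else 0)

lemma degT_nonneg (i : Fin n) : 0 ≤ degT n i := by
  unfold degT; split_ifs <;> norm_num

lemma mutT_mulVec (x : Fin n → ℝ) (i : Fin n) :
    (mutT n).mulVec x i =
      (if h : (i : ℕ) + 1 < n then x ⟨(i : ℕ) + 1, h⟩ else 0)
      + (if h : 0 < (i : ℕ) then x ⟨(i : ℕ) - 1, lt_of_le_of_lt (Nat.sub_le _ _) i.isLt⟩ else 0)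
      - degT n i * x i := by
  have hsplit : ∀ j : Fin n, mutT n i j =
      (if (i : ℕ) + 1 = (j : ℕ) then (1:ℝ) else 0)
      + (if (j : ℕ) + 1 = (i : ℕ) then (1:ℝ) else 0)
      + (if j = i then -(degT n i) else 0) := by
    intro j
    unfold mutT degT
    simp only [Matrix.of_apply]
    by_cases h1 : (i : ℕ) + 1 = (j : ℕ)
    · have hij : ¬ (j : ℕ) + 1 = (i : ℕ) := by omega
      have hji : ¬ j = i := by intro h; apply hij; rw [h] at h1 ⊢; omega
      rw [if_pos (Or.inl h1), if_pos h1, if_neg hij, if_neg hji]; ring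
    · by_cases h2 : (j : ℕ) + 1 = (i : ℕ)
      · have hji : ¬ j = i := by intro h; rw [h] at h2; omega
        rw [if_pos (Or.inr h2), if_neg h1, if_pos h2, if_neg hji]; ring
      · rw [if_neg (by tauto), if_neg h1, if_neg h2]
        by_cases h3 : i = j
        · rw [if_pos h3, if_pos h3.symm]
          subst h3; ring
        · rw [if_neg h3, if_neg (fun h => h3 h.symm)]; ring
  unfold Matrix.mulVec dotProduct
  simp only [hsplit, add_mul, Finset.sum_add_distrib]
  congr 1
  · congr 1
    · -- sum of first indicator
      by_cases h : (i : ℕ) + 1 < n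
      · rw [dif_pos h]
        rw [Finset.sum_eq_single (⟨(i : ℕ) + 1, h⟩ : Fin n)]
        · rw [if_pos rfl, one_mul]
        · intro b _ hb
          rw [if_neg, zero_mul]
          intro hc
          exact hb (by apply Fin.ext; exact hc.symm)
        · intro hb; exact absurd (Finset.mem_univ _) hb
      · rw [dif_neg h]
        apply Finset.sum_eq_zero
        intro j _
        rw [if_neg, zero_mul]
        intro hc
        exact h (hc ▸ j.isLt)
    · -- sum of second indicator
      by_cases h : 0 < (i : ℕ)
      · rw [dif_pos h]
        rw [Finset.sum_eq_single (⟨(i : ℕ) - 1, lt_of_le_of_lt (Nat.sub_le _ _) i.isLt⟩ : Fin n)]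
        · rw [if_pos (by simp; omega), one_mul]
        · intro b _ hb
          rw [if_neg, zero_mul]
          intro hc
          exact hb (by apply Fin.ext; simp; omega)
        · intro hb; exact absurd (Finset.mem_univ _) hb
      · rw [dif_neg h]
        apply Finset.sum_eq_zero
        intro j _
        rw [if_neg, zero_mul]
        omega
  · -- diagonal part
    rw [Finset.sum_eq_single i]
    · rw [if_pos rfl]; ring
    · intro b _ hb
      rw [if_neg hb, zero_mul]
    · intro hb; exact absurd (Finset.mem_univ _) hb

lemma mutT_mulVec_one : (mutT n).mulVec (fun _ => (1 : ℝ)) = 0 := by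
  funext i
  rw [Pi.zero_apply, mutT_mulVec]
  unfold degT
  split_ifs <;> norm_num

lemma Bmat_herm (m a : Fin n → ℝ) (s u ε : ℝ) : (Bmat n m a s u ε).IsHermitian := by
  unfold Matrix.IsHermitian
  ext i j
  simp only [Bmat, Matrix.conjTranspose_apply, Matrix.add_apply, Matrix.sub_apply,
    Matrix.smul_apply, Matrix.diagonal_apply, Matrix.one_apply, star_trivial]
  rw [mutT_symm j i]
  by_cases h : i = j
  · subst h; simp
  · rw [if_neg (fun hh => h hh.symm), if_neg h, if_neg (fun hh => h hh.symm), if_neg h]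

lemma Bmat_mulVec (m a : Fin n → ℝ) (s u ε : ℝ) (x : Fin n → ℝ) (i : Fin n) :
    (Bmat n m a s u ε).mulVec x i =
      (monod (m i) (a i) s - u) * x i + ε * (mutT n).mulVec x i := by
  simp only [Bmat, Matrix.add_mulVec, Matrix.sub_mulVec, Matrix.smul_mulVec,
    Matrix.one_mulVec, Matrix.mulVec_diagonal, Pi.add_apply, Pi.sub_apply, Pi.smul_apply,
    smul_eq_mul]
  ring

lemma Bmat_diff (m a : Fin n → ℝ) (s1 s2 u ε : ℝ) :
    Bmat n m a s1 u ε = Bmat n m a s2 u ε +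
      Matrix.diagonal (fun i => monod (m i) (a i) s1 - monod (m i) (a i) s2) := by
  unfold Bmat
  have : Matrix.diagonal (fun i => monod (m i) (a i) s1 - monod (m i) (a i) s2) =
      Matrix.diagonal (fun i => monod (m i) (a i) s1) -
        Matrix.diagonal (fun i => monod (m i) (a i) s2) := by
    rw [Matrix.diagonal_sub]
  rw [this]
  abel


end Toolkit


namespace Toolkit

variable {n : ℕ} {A : Matrix (Fin n) (Fin n) ℝ}

lemma dot_self_pos {v : Fin n → ℝ} (hv : v ≠ 0) : 0 < dotProduct v v :=
  lt_of_le_of_ne (Finset.sum_nonneg fun i _ => mul_self_nonneg (v i))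
    (Ne.symm ((dotProduct_self_eq_zero (v := v)).ne.mpr hv))

lemma dot_diag (d v : Fin n → ℝ) :
    dotProduct v (Matrix.diagonal d *ᵥ v) = ∑ i, d i * (v i * v i) := by
  unfold dotProduct
  congr 1
  funext i
  rw [Matrix.mulVec_diagonal]
  ring

lemma isHermitian_diag (d : Fin n → ℝ) : (Matrix.diagonal d).IsHermitian := by
  unfold Matrix.IsHermitian
  ext i j
  simp only [Matrix.conjTranspose_apply, star_trivial, Matrix.diagonal_apply]
  by_cases h : i = j
  · subst h; simp
  · rw [if_neg h, if_neg (fun hh => h hh.symm)]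

lemma maxEig_add_diag_le (hn : 0 < n) (hA : A.IsHermitian) (d : Fin n → ℝ) (C : ℝ)
    (hd : ∀ i, d i ≤ C) : maxEig (A + Matrix.diagonal d) ≤ maxEig A + C := by
  have hA2 : (A + Matrix.diagonal d).IsHermitian := hA.add (isHermitian_diag d)
  obtain ⟨v, hv, hAv⟩ := exists_maxEig_vec hn hA2
  have hvv := dot_self_pos hv
  have h1 : dotProduct v ((A + Matrix.diagonal d) *ᵥ v)
      = maxEig (A + Matrix.diagonal d) * dotProduct v v := by
    rw [hAv, dotProduct_smul, smul_eq_mul]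
  have h2 : dotProduct v ((A + Matrix.diagonal d) *ᵥ v)
      = dotProduct v (A *ᵥ v) + ∑ i, d i * (v i * v i) := by
    rw [Matrix.add_mulVec, dotProduct_add, dot_diag]
  have h3 : dotProduct v (A *ᵥ v) ≤ maxEig A * dotProduct v v := rayleigh_le hn hA v
  have h4 : ∑ i, d i * (v i * v i) ≤ C * dotProduct v v := by
    unfold dotProduct
    rw [Finset.mul_sum]
    exact Finset.sum_le_sum fun i _ => mul_le_mul_of_nonneg_right (hd i) (mul_self_nonneg (v i))
  nlinarith [h1, h2, h3, h4]

lemma maxEig_add_diag_ge (hn : 0 < n) (hA : A.IsHermitian) (d : Fin n → ℝ) (δ : ℝ)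
    (hd : ∀ i, δ ≤ d i) : maxEig A + δ ≤ maxEig (A + Matrix.diagonal d) := by
  have hA2 : (A + Matrix.diagonal d).IsHermitian := hA.add (isHermitian_diag d)
  obtain ⟨v, hv, hAv⟩ := exists_maxEig_vec hn hA
  have hvv := dot_self_pos hv
  have h1 : dotProduct v (A *ᵥ v) = maxEig A * dotProduct v v := by
    rw [hAv, dotProduct_smul, smul_eq_mul]
  have h2 : dotProduct v ((A + Matrix.diagonal d) *ᵥ v)
      = dotProduct v (A *ᵥ v) + ∑ i, d i * (v i * v i) := by
    rw [Matrix.add_mulVec, dotProduct_add, dot_diag]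
  have h3 : dotProduct v ((A + Matrix.diagonal d) *ᵥ v)
      ≤ maxEig (A + Matrix.diagonal d) * dotProduct v v := rayleigh_le hn hA2 v
  have h4 : δ * dotProduct v v ≤ ∑ i, d i * (v i * v i) := by
    unfold dotProduct
    rw [Finset.mul_sum]
    exact Finset.sum_le_sum fun i _ => mul_le_mul_of_nonneg_right (hd i) (mul_self_nonneg (v i))
  nlinarith [h1, h2, h3, h4]

/-- symmetric dot product exchange -/
lemma dot_mulVec_symm (hA : A.IsHermitian) (x v : Fin n → ℝ) :
    dotProduct x (A *ᵥ v) = dotProduct (A *ᵥ x) v := by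
  have hT : Aᵀ = A := by
    rw [← Matrix.conjTranspose_eq_transpose_of_trivial]; exact hA
  rw [Matrix.dotProduct_mulVec]
  congr 1
  conv_lhs => rw [← hT, Matrix.vecMul_transpose]

/-- a nonnegative eigenvector for the top eigenvalue, provided off-diagonal entries
are nonnegative -/
lemma abs_eigvec (hn : 0 < n) (hA : A.IsHermitian) (hoff : ∀ i j, i ≠ j → 0 ≤ A i j) :
    ∃ v : Fin n → ℝ, v ≠ 0 ∧ (∀ i, 0 ≤ v i) ∧ A *ᵥ v = maxEig A • v := by
  obtain ⟨w, hw, hAw⟩ := exists_maxEig_vec hn hA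
  set v : Fin n → ℝ := fun i => |w i| with hv
  have hvne : v ≠ 0 := by
    intro h
    apply hw
    funext i
    have := congrFun h i
    simp only [hv, Pi.zero_apply] at this ⊢
    exact abs_eq_zero.mp this
  have hvv : dotProduct v v = dotProduct w w := by
    unfold dotProduct
    congr 1; funext i
    simp only [hv, abs_mul_abs_self]
  have hq : ∀ (z : Fin n → ℝ), dotProduct z (A *ᵥ z) = ∑ i, ∑ j, A i j * (z i * z j) := by
    intro z
    unfold dotProduct Matrix.mulVec dotProduct
    rw [Finset.sum_congr rfl (fun i _ => by rw [Finset.mul_sum])]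
    congr 1; funext i
    congr 1; funext j
    ring
  have hmono : dotProduct w (A *ᵥ w) ≤ dotProduct v (A *ᵥ v) := by
    rw [hq, hq]
    refine Finset.sum_le_sum fun i _ => Finset.sum_le_sum fun j _ => ?_
    by_cases h : i = j
    · subst h
      simp only [hv, abs_mul_abs_self, le_refl]
    · refine mul_le_mul_of_nonneg_left ?_ (hoff i j h)
      calc w i * w j ≤ |w i * w j| := le_abs_self _
      _ = |w i| * |w j| := abs_mul _ _
  have hray : dotProduct v (A *ᵥ v) ≤ maxEig A * dotProduct v v := rayleigh_le hn hA v
  have hww : dotProduct w (A *ᵥ w) = maxEig A * dotProduct w w := by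
    rw [hAw, dotProduct_smul, smul_eq_mul]
  have heq : dotProduct v (A *ᵥ v) = maxEig A * dotProduct v v := by
    rw [hvv]
    linarith [hmono, hray, hww, hvv ▸ hray]
  exact ⟨v, hvne, fun i => abs_nonneg _, maximizer_is_eig hn hA heq⟩

end Toolkit

namespace Toolkit

variable {n : ℕ}

lemma monod_zero (m a : ℝ) : monod m a 0 = 0 := by
  unfold monod; simp

lemma monod_mono {m a : ℝ} (hm : 0 < m) (ha : 0 < a) {s1 s2 : ℝ}
    (h1 : 0 ≤ s1) (h12 : s1 < s2) : monod m a s1 < monod m a s2 := by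
  unfold monod
  rw [div_lt_div_iff₀ (by linarith) (by linarith)]
  nlinarith [mul_pos (mul_pos hm ha) (sub_pos.mpr h12)]

lemma monod_contOn {m a : ℝ} (ha : 0 < a) :
    ContinuousOn (fun s => monod m a s) (Set.Icc (0:ℝ) 1) := by
  unfold monod
  apply ContinuousOn.div
  · exact (continuous_const.mul continuous_id).continuousOn
  · exact (continuous_const.add continuous_id).continuousOn
  · intro s hs hc
    have h1 := hs.1
    change a + s = 0 at hc
    linarith

variable {m a : Fin n → ℝ} {u ε : ℝ}

lemma f_strictMono (hn : 0 < n) (hm : ∀ i, 0 < m i) (ha : ∀ i, 0 < a i)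
    {s1 s2 : ℝ} (h1 : 0 ≤ s1) (h12 : s1 < s2) :
    maxEig (Bmat n m a s1 u ε) < maxEig (Bmat n m a s2 u ε) := by
  haveI : Nonempty (Fin n) := ⟨⟨0, hn⟩⟩
  set d : Fin n → ℝ := fun i => monod (m i) (a i) s2 - monod (m i) (a i) s1 with hd
  have hdpos : ∀ i, 0 < d i := fun i => sub_pos.mpr (monod_mono (hm i) (ha i) h1 h12)
  set δ := Finset.univ.inf' Finset.univ_nonempty d with hδ
  have hδpos : 0 < δ := by
    rw [hδ, Finset.lt_inf'_iff]
    exact fun i _ => hdpos i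
  have hdiff := Bmat_diff (n := n) m a s2 s1 u ε
  have := maxEig_add_diag_ge hn (Bmat_herm m a s1 u ε) d δ
    (fun i => Finset.inf'_le d (Finset.mem_univ i))
  rw [← hdiff] at this
  linarith

lemma f_diff_bound (hn : 0 < n) (s1 s2 : ℝ) :
    |maxEig (Bmat n m a s1 u ε) - maxEig (Bmat n m a s2 u ε)| ≤
      ∑ i, |monod (m i) (a i) s1 - monod (m i) (a i) s2| := by
  set C := ∑ i, |monod (m i) (a i) s1 - monod (m i) (a i) s2| with hC
  have key : ∀ t1 t2 : ℝ, maxEig (Bmat n m a t1 u ε) ≤ maxEig (Bmat n m a t2 u ε) +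
      ∑ i, |monod (m i) (a i) t1 - monod (m i) (a i) t2| := by
    intro t1 t2
    have hdiff := Bmat_diff (n := n) m a t1 t2 u ε
    have := maxEig_add_diag_le hn (Bmat_herm m a t2 u ε)
      (fun i => monod (m i) (a i) t1 - monod (m i) (a i) t2)
      (∑ i, |monod (m i) (a i) t1 - monod (m i) (a i) t2|)
      (fun i => le_trans (le_abs_self _) (Finset.single_le_sum
        (f := fun i => |monod (m i) (a i) t1 - monod (m i) (a i) t2|)
        (fun j _ => abs_nonneg _) (Finset.mem_univ i)))
    rw [← hdiff] at this
    exact this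
  have h1 := key s1 s2
  have h2 := key s2 s1
  rw [abs_le]
  constructor
  · have : ∑ i, |monod (m i) (a i) s2 - monod (m i) (a i) s1| = C := by
      rw [hC]; congr 1; funext i; rw [abs_sub_comm]
    rw [this] at h2
    linarith
  · linarith

lemma f_contOn (hn : 0 < n) (ha : ∀ i, 0 < a i) :
    ContinuousOn (fun s => maxEig (Bmat n m a s u ε)) (Set.Icc (0:ℝ) 1) := by
  intro s0 hs0
  have hgOn : ContinuousOn
      (fun s => ∑ i, |monod (m i) (a i) s - monod (m i) (a i) s0|) (Set.Icc (0:ℝ) 1) := by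
    apply continuousOn_finset_sum
    intro i _
    exact ((monod_contOn (ha i)).sub continuousOn_const).abs
  have hg := hgOn s0 hs0
  have hg0 : (∑ i, |monod (m i) (a i) s0 - monod (m i) (a i) s0|) = 0 := by
    simp
  rw [Metric.continuousWithinAt_iff] at hg ⊢
  intro δ hδ
  obtain ⟨δ', hδ', hg'⟩ := hg δ hδ
  refine ⟨δ', hδ', fun s hs hdist => ?_⟩
  have hb := f_diff_bound (n := n) (m := m) (a := a) (u := u) (ε := ε) hn s s0
  have := hg' hs hdist
  rw [Real.dist_eq, hg0, sub_zero] at this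
  rw [Real.dist_eq]
  exact lt_of_le_of_lt hb (lt_of_abs_lt this)

lemma maxEig_Bmat_zero (hn : 0 < n) (hu : 0 < u) (hε : 0 ≤ ε) :
    maxEig (Bmat n m a 0 u ε) = -u := by
  set E := {t : ℝ | ∃ v : Fin n → ℝ, v ≠ 0 ∧ (Bmat n m a 0 u ε).mulVec v = t • v} with hE
  have aux : ∀ (t : ℝ) (w : Fin n → ℝ) (i0 : Fin n), 0 < w i0 →
      (Bmat n m a 0 u ε).mulVec w = t • w → t ≤ -u := by
    intro t w i0 hi0 hAw
    obtain ⟨imax, _, hmax⟩ := Finset.exists_max_image Finset.univ w ⟨i0, Finset.mem_univ i0⟩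
    have hwmax : 0 < w imax := lt_of_lt_of_le hi0 (hmax i0 (Finset.mem_univ i0))
    have heq := congrFun hAw imax
    rw [Bmat_mulVec, mutT_mulVec, monod_zero] at heq
    simp only [Pi.smul_apply, smul_eq_mul] at heq
    have hup : (if h : (imax : ℕ) + 1 < n then w ⟨(imax : ℕ) + 1, h⟩ else 0) ≤
        (if (imax : ℕ) + 1 < n then (1:ℝ) else 0) * w imax := by
      by_cases h : (imax : ℕ) + 1 < n
      · rw [dif_pos h, if_pos h, one_mul]
        exact hmax _ (Finset.mem_univ _)
      · rw [dif_neg h, if_neg h, zero_mul]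
    have hdown : (if h : 0 < (imax : ℕ) then
        w ⟨(imax : ℕ) - 1, lt_of_le_of_lt (Nat.sub_le _ _) imax.isLt⟩ else 0) ≤
        (if 0 < (imax : ℕ) then (1:ℝ) else 0) * w imax := by
      by_cases h : 0 < (imax : ℕ)
      · rw [dif_pos h, if_pos h, one_mul]
        exact hmax _ (Finset.mem_univ _)
      · rw [dif_neg h, if_neg h, zero_mul]
    have hT : (mutT n).mulVec w imax ≤ 0 := by
      rw [mutT_mulVec]
      unfold degT
      rw [add_mul]
      linarith
    have hT' : (if h : (imax : ℕ) + 1 < n then w ⟨(imax : ℕ) + 1, h⟩ else 0)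
        + (if h : 0 < (imax : ℕ) then
          w ⟨(imax : ℕ) - 1, lt_of_le_of_lt (Nat.sub_le _ _) imax.isLt⟩ else 0)
        - degT n imax * w imax ≤ 0 := by
      unfold degT
      rw [add_mul]
      linarith
    nlinarith [mul_nonneg hε (neg_nonneg.mpr hT'), heq]
  have hub : ∀ t ∈ E, t ≤ -u := by
    rintro t ⟨v, hv, hAv⟩
    obtain ⟨i0, hi0⟩ := Function.ne_iff.mp hv
    simp only [Pi.zero_apply] at hi0
    rcases lt_or_gt_of_ne hi0 with h | h
    · refine aux t (-v) i0 (by simpa using h) ?_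
      rw [Matrix.mulVec_neg, hAv]
      funext j
      simp
    · exact aux t v i0 h hAv
  have hmem : -u ∈ E := by
    refine ⟨fun _ => 1, ?_, ?_⟩
    · intro hc
      have := congrFun hc ⟨0, hn⟩
      simp at this
    · funext i
      rw [Bmat_mulVec, mutT_mulVec_one, monod_zero]
      simp
  exact le_antisymm (csSup_le ⟨-u, hmem⟩ hub) (le_csSup ⟨-u, hub⟩ hmem)

end Toolkit

namespace Toolkit

variable {n : ℕ} {m a : Fin n → ℝ} {u ε : ℝ}

lemma prop_zero (hε : 0 < ε) {s : ℝ} {x : Fin n → ℝ} (hx : ∀ i, 0 ≤ x i)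
    (hBx : (Bmat n m a s u ε).mulVec x = 0) {i : Fin n} (hi : x i = 0) : x = 0 := by
  have step : ∀ j : Fin n, x j = 0 →
      (∀ h : (j : ℕ) + 1 < n, x ⟨(j : ℕ) + 1, h⟩ = 0) ∧
      (∀ _ : 0 < (j : ℕ), x ⟨(j : ℕ) - 1, lt_of_le_of_lt (Nat.sub_le _ _) j.isLt⟩ = 0) := by
    intro j hj
    have heq := congrFun hBx j
    rw [Bmat_mulVec, mutT_mulVec, hj, Pi.zero_apply] at heq
    have hsum : (if h : (j : ℕ) + 1 < n then x ⟨(j : ℕ) + 1, h⟩ else 0)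
        + (if h : 0 < (j : ℕ) then
          x ⟨(j : ℕ) - 1, lt_of_le_of_lt (Nat.sub_le _ _) j.isLt⟩ else 0) = 0 := by
      have : ε * ((if h : (j : ℕ) + 1 < n then x ⟨(j : ℕ) + 1, h⟩ else 0)
        + (if h : 0 < (j : ℕ) then
          x ⟨(j : ℕ) - 1, lt_of_le_of_lt (Nat.sub_le _ _) j.isLt⟩ else 0)) = 0 := by
        rw [mul_comm] at heq ⊢
        nlinarith [heq]
      exact (mul_eq_zero.mp this).resolve_left (ne_of_gt hε)
    have hup0 : 0 ≤ (if h : (j : ℕ) + 1 < n then x ⟨(j : ℕ) + 1, h⟩ else 0) := by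
      split_ifs with h
      · exact hx _
      · exact le_refl 0
    have hdn0 : 0 ≤ (if h : 0 < (j : ℕ) then
        x ⟨(j : ℕ) - 1, lt_of_le_of_lt (Nat.sub_le _ _) j.isLt⟩ else 0) := by
      split_ifs with h
      · exact hx _
      · exact le_refl 0
    constructor
    · intro h
      have h1 : (if h : (j : ℕ) + 1 < n then x ⟨(j : ℕ) + 1, h⟩ else 0) = 0 := by linarith
      rw [dif_pos h] at h1
      exact h1
    · intro h
      have h1 : (if h : 0 < (j : ℕ) then
          x ⟨(j : ℕ) - 1, lt_of_le_of_lt (Nat.sub_le _ _) j.isLt⟩ else 0) = 0 := by linarith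
      rw [dif_pos h] at h1
      exact h1
  have up : ∀ k : ℕ, ∀ h : (i : ℕ) + k < n, x ⟨(i : ℕ) + k, h⟩ = 0 := by
    intro k
    induction k with
    | zero =>
      intro h
      have : (⟨(i : ℕ) + 0, h⟩ : Fin n) = i := Fin.ext (by simp <;> omega)
      rw [this]; exact hi
    | succ k ih =>
      intro h
      have hk : (i : ℕ) + k < n := by omega
      have hxk := ih hk
      have h2 := (step ⟨(i : ℕ) + k, hk⟩ hxk).1 (by omega)
      have : (⟨(i : ℕ) + (k + 1), h⟩ : Fin n)
          = ⟨((⟨(i : ℕ) + k, hk⟩ : Fin n) : ℕ) + 1, by omega⟩ := Fin.ext (by simp <;> omega)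
      rw [this]; exact h2
  have down : ∀ k : ℕ, k ≤ (i : ℕ) →
      x ⟨(i : ℕ) - k, lt_of_le_of_lt (Nat.sub_le _ _) i.isLt⟩ = 0 := by
    intro k
    induction k with
    | zero =>
      intro _
      have : (⟨(i : ℕ) - 0, lt_of_le_of_lt (Nat.sub_le _ _) i.isLt⟩ : Fin n) = i :=
        Fin.ext (by simp <;> omega)
      rw [this]; exact hi
    | succ k ih =>
      intro hk
      have hxk := ih (by omega)
      have hpos : 0 < ((⟨(i : ℕ) - k, lt_of_le_of_lt (Nat.sub_le _ _) i.isLt⟩ : Fin n) : ℕ) := by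
        simp; omega
      have h2 := (step _ hxk).2 hpos
      have : (⟨(i : ℕ) - (k + 1), lt_of_le_of_lt (Nat.sub_le _ _) i.isLt⟩ : Fin n)
          = ⟨((⟨(i : ℕ) - k, lt_of_le_of_lt (Nat.sub_le _ _) i.isLt⟩ : Fin n) : ℕ) - 1,
              lt_of_le_of_lt (Nat.sub_le _ _) (by simp; omega)⟩ := Fin.ext (by simp <;> omega)
      rw [this]; exact h2
  funext j
  rcases le_or_gt (i : ℕ) (j : ℕ) with h | h
  · have hv : (i : ℕ) + ((j : ℕ) - (i : ℕ)) < n := by omega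
    have := up ((j : ℕ) - (i : ℕ)) hv
    have heq : (⟨(i : ℕ) + ((j : ℕ) - (i : ℕ)), hv⟩ : Fin n) = j := Fin.ext (by simp <;> omega)
    rw [heq] at this
    rw [this]; rfl
  · have := down ((i : ℕ) - (j : ℕ)) (by omega)
    have heq : (⟨(i : ℕ) - ((i : ℕ) - (j : ℕ)),
        lt_of_le_of_lt (Nat.sub_le _ _) i.isLt⟩ : Fin n) = j := Fin.ext (by simp <;> omega)
    rw [heq] at this
    rw [this]; rfl

lemma pos_of_nonneg_kernel (hε : 0 < ε) {s : ℝ} {x : Fin n → ℝ} (hx : ∀ i, 0 ≤ x i)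
    (hBx : (Bmat n m a s u ε).mulVec x = 0) (hxne : x ≠ 0) : ∀ i, 0 < x i := by
  intro i
  rcases lt_or_eq_of_le (hx i) with h | h
  · exact h
  · exact absurd (prop_zero hε hx hBx h.symm) hxne

lemma maxEig_zero_of_pos_kernel (hn : 0 < n) (hε : 0 < ε) {s : ℝ} {x : Fin n → ℝ}
    (hx : ∀ i, 0 < x i) (hBx : (Bmat n m a s u ε).mulVec x = 0) :
    maxEig (Bmat n m a s u ε) = 0 := by
  have hherm := Bmat_herm (n := n) m a s u ε
  have hxne : x ≠ 0 := by
    intro h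
    exact absurd ((congrFun h ⟨0, hn⟩).symm ▸ hx ⟨0, hn⟩) (lt_irrefl 0)
  have hge : (0:ℝ) ≤ maxEig (Bmat n m a s u ε) := by
    refine eig_le_maxEig hn hherm hxne ?_
    rw [hBx]
    funext j; simp
  have hoff : ∀ i j, i ≠ j → 0 ≤ (Bmat n m a s u ε) i j := by
    intro i j hij
    simp only [Bmat, Matrix.add_apply, Matrix.sub_apply, Matrix.smul_apply,
      Matrix.diagonal_apply_ne _ hij, Matrix.one_apply_ne hij, smul_eq_mul, mul_zero,
      zero_sub, neg_zero, zero_add]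
    exact mul_nonneg (le_of_lt hε) (mutT_offdiag_nonneg i j hij)
  obtain ⟨v, hvne, hvnn, hAv⟩ := abs_eigvec hn hherm hoff
  have hdot : dotProduct x ((Bmat n m a s u ε) *ᵥ v) = 0 := by
    rw [dot_mulVec_symm hherm, hBx]
    simp [dotProduct]
  rw [hAv, dotProduct_smul, smul_eq_mul] at hdot
  have hxv : 0 < dotProduct x v := by
    obtain ⟨j, hj⟩ := Function.ne_iff.mp hvne
    simp only [Pi.zero_apply] at hj
    have hvj : 0 < v j := lt_of_le_of_ne (hvnn j) (Ne.symm hj)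
    unfold dotProduct
    have : ∀ k ∈ Finset.univ, 0 ≤ x k * v k :=
      fun k _ => mul_nonneg (le_of_lt (hx k)) (hvnn k)
    have hjpos : 0 < x j * v j := mul_pos (hx j) hvj
    exact Finset.sum_pos' this ⟨j, Finset.mem_univ j, hjpos⟩
  rcases mul_eq_zero.mp hdot with h | h
  · exact h
  · exact absurd h (ne_of_gt hxv)

lemma exists_pos_kernel (hn : 0 < n) (hε : 0 < ε) {s : ℝ}
    (hf : maxEig (Bmat n m a s u ε) = 0) :
    ∃ v : Fin n → ℝ, (∀ i, 0 < v i) ∧ (Bmat n m a s u ε).mulVec v = 0 := by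
  have hherm := Bmat_herm (n := n) m a s u ε
  have hoff : ∀ i j, i ≠ j → 0 ≤ (Bmat n m a s u ε) i j := by
    intro i j hij
    simp only [Bmat, Matrix.add_apply, Matrix.sub_apply, Matrix.smul_apply,
      Matrix.diagonal_apply_ne _ hij, Matrix.one_apply_ne hij, smul_eq_mul, mul_zero,
      zero_sub, neg_zero, zero_add]
    exact mul_nonneg (le_of_lt hε) (mutT_offdiag_nonneg i j hij)
  obtain ⟨v, hvne, hvnn, hAv⟩ := abs_eigvec hn hherm hoff
  rw [hf] at hAv
  have hAv0 : (Bmat n m a s u ε).mulVec v = 0 := by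
    rw [hAv]; funext j; simp
  exact ⟨v, pos_of_nonneg_kernel hε hvnn hAv0 hvne, hAv0⟩

lemma kernel_one_dim (hε : 0 < ε) {s : ℝ} {xs y : Fin n → ℝ}
    (hxs : ∀ i, 0 < xs i) (hx : (Bmat n m a s u ε).mulVec xs = 0)
    (hy : (Bmat n m a s u ε).mulVec y = 0) (hn : 0 < n) : ∃ c : ℝ, y = c • xs := by
  obtain ⟨i0, _, hmin⟩ := Finset.exists_min_image Finset.univ (fun i => y i / xs i)
    ⟨⟨0, hn⟩, Finset.mem_univ _⟩
  set c := y i0 / xs i0 with hc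
  refine ⟨c, ?_⟩
  set z : Fin n → ℝ := y - c • xs with hz
  have hzB : (Bmat n m a s u ε).mulVec z = 0 := by
    rw [hz, Matrix.mulVec_sub, hy, Matrix.mulVec_smul, hx]
    simp
  have hznn : ∀ i, 0 ≤ z i := by
    intro i
    have := hmin i (Finset.mem_univ i)
    have hxi := hxs i
    simp only [hz, Pi.sub_apply, Pi.smul_apply, smul_eq_mul, sub_nonneg]
    rw [div_le_div_iff₀ (hxs i0) hxi] at this
    rw [hc, div_mul_eq_mul_div, div_le_iff₀ (hxs i0)]
    linarith
  have hz0 : z i0 = 0 := by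
    simp only [hz, Pi.sub_apply, Pi.smul_apply, smul_eq_mul, hc]
    rw [div_mul_cancel₀]
    · ring
    · exact ne_of_gt (hxs i0)
  have := prop_zero hε hznn hzB hz0
  rw [hz] at this
  funext i
  have := congrFun this i
  simp only [Pi.sub_apply, Pi.zero_apply, Pi.smul_apply, smul_eq_mul] at this ⊢
  linarith

lemma sum_mulVec_Bmat (s : ℝ) (x : Fin n → ℝ) :
    ∑ i, (Bmat n m a s u ε).mulVec x i = ∑ j, (monod (m j) (a j) s - u) * x j := by
  have hTsum : ∑ i, (mutT n).mulVec x i = 0 := by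
    have hswap : ∑ i, (mutT n).mulVec x i = ∑ j, (∑ i, mutT n i j) * x j := by
      unfold Matrix.mulVec dotProduct
      rw [Finset.sum_comm]
      congr 1; funext j
      rw [Finset.sum_mul]
    rw [hswap]
    apply Finset.sum_eq_zero
    intro j _
    have : ∑ i, mutT n i j = (mutT n).mulVec (fun _ => 1) j := by
      unfold Matrix.mulVec dotProduct
      congr 1; funext i
      rw [mul_one, mutT_symm]
    rw [this, mutT_mulVec_one]
    simp
  calc ∑ i, (Bmat n m a s u ε).mulVec x i
      = ∑ i, ((monod (m i) (a i) s - u) * x i + ε * (mutT n).mulVec x i) := by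
        congr 1; funext i; rw [Bmat_mulVec]
    _ = ∑ i, (monod (m i) (a i) s - u) * x i + ε * ∑ i, (mutT n).mulVec x i := by
        rw [Finset.sum_add_distrib, Finset.mul_sum]
    _ = ∑ j, (monod (m j) (a j) s - u) * x j := by rw [hTsum]; ring

end Toolkit

/-- if `λ(B(1,u,ε)) > 0` there is a unique `s* ∈ (0,1)` with `λ(B(s*,u,ε)) = 0`
and a unique positive `x*` with `B(s*,u,ε)x* = 0` and `Σ x*ⱼ + s* = 1`; the only steady states
in `ℝ₊ⁿ × [0,1]` are the washout and `(x*, s*)`. -/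
theorem stmt_6 (n : ℕ) (hn : 1 ≤ n) (m a : Fin n → ℝ)
    (hm : ∀ i, 0 < m i) (ha : ∀ i, 0 < a i)
    (ε u : ℝ) (hε : 0 < ε) (hu : 0 < u)
    (hpos : 0 < maxEig (Bmat n m a 1 u ε)) :
    ∃ sstar : ℝ, sstar ∈ Set.Ioo (0 : ℝ) 1 ∧ maxEig (Bmat n m a sstar u ε) = 0 ∧
      (∀ s' ∈ Set.Ioo (0 : ℝ) 1, maxEig (Bmat n m a s' u ε) = 0 → s' = sstar) ∧
      ∃ xstar : Fin n → ℝ, (∀ i, 0 < xstar i) ∧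
        (Bmat n m a sstar u ε).mulVec xstar = 0 ∧ (∑ j, xstar j) + sstar = 1 ∧
        (∀ x' : Fin n → ℝ, (∀ i, 0 < x' i) →
          (Bmat n m a sstar u ε).mulVec x' = 0 → (∑ j, x' j) + sstar = 1 → x' = xstar) ∧
        (∀ (x : Fin n → ℝ) (s : ℝ), (∀ i, 0 ≤ x i) → s ∈ Set.Icc (0 : ℝ) 1 →
          IsSteady n m a ε u x s → (x = 0 ∧ s = 1) ∨ (x = xstar ∧ s = sstar)) := by
  have hn' : 0 < n := hn
  have hcont : ContinuousOn (fun s => maxEig (Bmat n m a s u ε)) (Set.Icc (0:ℝ) 1) :=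
    Toolkit.f_contOn hn' ha
  have hf0 : maxEig (Bmat n m a 0 u ε) = -u := Toolkit.maxEig_Bmat_zero hn' hu hε.le
  have hmono : ∀ s1 s2 : ℝ, 0 ≤ s1 → s1 < s2 →
      maxEig (Bmat n m a s1 u ε) < maxEig (Bmat n m a s2 u ε) :=
    fun s1 s2 h1 h12 => Toolkit.f_strictMono hn' hm ha h1 h12
  have hivt := intermediate_value_Ioo (zero_le_one) hcont
  have h0mem : (0:ℝ) ∈ Set.Ioo (maxEig (Bmat n m a 0 u ε)) (maxEig (Bmat n m a 1 u ε)) := by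
    rw [hf0]; exact ⟨by linarith, hpos⟩
  obtain ⟨sstar, hsIoo, hfs'⟩ := hivt h0mem
  have hfs : maxEig (Bmat n m a sstar u ε) = 0 := hfs'
  -- positive kernel vector and xstar
  obtain ⟨v, hvpos, hvker⟩ := Toolkit.exists_pos_kernel hn' hε hfs
  have hsv : 0 < ∑ j, v j :=
    Finset.sum_pos (fun j _ => hvpos j) ⟨⟨0, hn'⟩, Finset.mem_univ _⟩
  have hs1 : 0 < 1 - sstar := by have := hsIoo.2; linarith
  set xstar : Fin n → ℝ := ((1 - sstar) / (∑ j, v j)) • v with hxstar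
  have hxpos : ∀ i, 0 < xstar i := by
    intro i
    exact mul_pos (div_pos hs1 hsv) (hvpos i)
  have hxker : (Bmat n m a sstar u ε).mulVec xstar = 0 := by
    rw [hxstar, Matrix.mulVec_smul, hvker, smul_zero]
  have hxsumv : ∑ j, xstar j = 1 - sstar := by
    rw [hxstar]
    simp only [Pi.smul_apply, smul_eq_mul, ← Finset.mul_sum]
    rw [div_mul_cancel₀ _ (ne_of_gt hsv)]
  have hxsum : (∑ j, xstar j) + sstar = 1 := by rw [hxsumv]; ring
  have huniq : ∀ x' : Fin n → ℝ,
      (Bmat n m a sstar u ε).mulVec x' = 0 → (∑ j, x' j) + sstar = 1 → x' = xstar := by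
    intro x' hker hsum
    obtain ⟨c, hc⟩ := Toolkit.kernel_one_dim hε hxpos hxker hker hn'
    have hsum' : ∑ j, x' j = c * ∑ j, xstar j := by
      rw [hc]
      simp only [Pi.smul_apply, smul_eq_mul, ← Finset.mul_sum]
    rw [hxsumv] at hsum'
    have hc1 : c = 1 := by
      have : ∑ j, x' j = 1 - sstar := by linarith
      rw [this] at hsum'
      have := hs1
      nlinarith
    rw [hc, hc1, one_smul]
  refine ⟨sstar, hsIoo, hfs, ?_, xstar, hxpos, hxker, hxsum, fun x' _ => huniq x', ?_⟩
  · intro s' hs' hfs'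
    by_contra hne
    rcases lt_or_gt_of_ne hne with h | h
    · have := hmono s' sstar hs'.1.le h
      rw [hfs, hfs'] at this
      exact lt_irrefl 0 this
    · have := hmono sstar s' hsIoo.1.le h
      rw [hfs, hfs'] at this
      exact lt_irrefl 0 this
  · intro x s hxnn hsIcc hsteady
    obtain ⟨hB, hsum⟩ := hsteady
    by_cases hx0 : x = 0
    · left
      refine ⟨hx0, ?_⟩
      rw [hx0] at hsum
      simp only [Pi.zero_apply, mul_zero, Finset.sum_const_zero] at hsum
      have : 1 - s = 0 := by
        rcases mul_eq_zero.mp hsum.symm with h | h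
        · exact absurd h (ne_of_gt hu)
        · exact h
      linarith
    · right
      have hxpos' := Toolkit.pos_of_nonneg_kernel hε hxnn hB hx0
      have hfs2 : maxEig (Bmat n m a s u ε) = 0 :=
        Toolkit.maxEig_zero_of_pos_kernel hn' hε hxpos' hB
      have hss : s = sstar := by
        by_contra hne
        rcases lt_or_gt_of_ne hne with h | h
        · have := hmono s sstar hsIcc.1 h
          rw [hfs, hfs2] at this
          exact lt_irrefl 0 this
        · have := hmono sstar s hsIoo.1.le h
          rw [hfs, hfs2] at this
          exact lt_irrefl 0 this
      subst hss
      have hcol := Toolkit.sum_mulVec_Bmat (m := m) (a := a) (u := u) (ε := ε) s x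
      rw [hB] at hcol
      simp only [Pi.zero_apply, Finset.sum_const_zero] at hcol
      have hexp : ∑ j, (monod (m j) (a j) s - u) * x j
          = (∑ j, monod (m j) (a j) s * x j) - u * ∑ j, x j := by
        rw [Finset.mul_sum, ← Finset.sum_sub_distrib]
        congr 1; funext j; ring
      have hux : u * (∑ j, x j) = u * (1 - s) := by
        rw [← hsum]
        rw [hexp] at hcol
        linarith
      have hsx : (∑ j, x j) + s = 1 := by
        have := mul_left_cancel₀ (ne_of_gt hu) hux
        linarith
      exact ⟨huniq x hB hsx, rfl⟩
end
end

section
/- For every ε > 0 and u > 0, the largest eigenvalue λ(B(1, u, ε)) satisfies max( μ̂(1) − u − 2ε, μ̄(1) − u ) ≤ λ(B(1, u, ε)) ≤ μ̂(1) − u, where μ̄(s) := (1/n) Σ_{j=1}^n μ_j(s) and μ̂(s) := max_{1≤j≤n} μ_j(s). -/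
open Matrix Filter Set Topology Asymptotics

noncomputable section

lemma nbr_eq (n : ℕ) (i j : Fin n) :
    (if ((i : ℕ) + 1 = (j : ℕ) ∨ (j : ℕ) + 1 = (i : ℕ)) then (1:ℝ) else 0)
      = (if (i : ℕ) + 1 = (j : ℕ) then (1:ℝ) else 0)
        + (if (j : ℕ) + 1 = (i : ℕ) then (1:ℝ) else 0) := by
  by_cases h1 : (i : ℕ) + 1 = (j : ℕ) <;> by_cases h2 : (j : ℕ) + 1 = (i : ℕ) <;>
    simp [h1, h2] <;> omega

lemma sum_nbr (n : ℕ) (i : Fin n) :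
    ∑ j : Fin n, (if ((i : ℕ) + 1 = (j : ℕ) ∨ (j : ℕ) + 1 = (i : ℕ)) then (1:ℝ) else 0)
      = (if 0 < (i : ℕ) then (1:ℝ) else 0) + (if (i : ℕ) + 1 < n then (1:ℝ) else 0) := by
  simp only [nbr_eq, Finset.sum_add_distrib]
  have hsucc : ∑ j : Fin n, (if (i : ℕ) + 1 = (j : ℕ) then (1:ℝ) else 0)
      = if (i:ℕ)+1 < n then (1:ℝ) else 0 := by
    by_cases h : (i:ℕ)+1 < n
    · rw [if_pos h, Finset.sum_eq_single (⟨(i:ℕ)+1, h⟩ : Fin n)]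
      · simp
      · intro j _ hj; rw [if_neg]; intro hc; exact hj (Fin.ext hc.symm)
      · simp
    · rw [if_neg h, Finset.sum_eq_zero]; intro j _; rw [if_neg]
      intro hc; exact h (hc ▸ j.isLt)
  have hpred : ∑ j : Fin n, (if (j : ℕ) + 1 = (i : ℕ) then (1:ℝ) else 0)
      = if 0 < (i:ℕ) then (1:ℝ) else 0 := by
    by_cases h : 0 < (i:ℕ)
    · rw [if_pos h, Finset.sum_eq_single (⟨(i:ℕ)-1, lt_of_le_of_lt (Nat.pred_le _) i.isLt⟩ : Fin n)]
      · rw [if_pos]; simp; omega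
      · intro j _ hj; rw [if_neg]; intro hc; apply hj; apply Fin.ext; simp; omega
      · simp
    · rw [if_neg h, Finset.sum_eq_zero]; intro j _; rw [if_neg]; omega
  rw [hsucc, hpred, add_comm]

lemma mutT_decomp (n : ℕ) (i j : Fin n) :
    mutT n i j = (if ((i : ℕ) + 1 = (j : ℕ) ∨ (j : ℕ) + 1 = (i : ℕ)) then (1:ℝ) else 0)
      + (if i = j then
          -((if 0 < (i : ℕ) then (1 : ℝ) else 0) + (if (i : ℕ) + 1 < n then (1 : ℝ) else 0))
        else 0) := by
  simp only [mutT, Matrix.of_apply]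
  by_cases h1 : ((i : ℕ) + 1 = (j : ℕ) ∨ (j : ℕ) + 1 = (i : ℕ))
  · rw [if_pos h1, if_pos h1, if_neg, add_zero]
    rintro rfl; omega
  · rw [if_neg h1, if_neg h1, zero_add]

lemma mutT_row_sum (n : ℕ) (i : Fin n) : ∑ j, mutT n i j = 0 := by
  simp only [mutT_decomp, Finset.sum_add_distrib, sum_nbr]
  rw [Finset.sum_ite_eq Finset.univ i
    (fun _ => -((if 0 < (i : ℕ) then (1 : ℝ) else 0) + (if (i : ℕ) + 1 < n then (1 : ℝ) else 0)))]
  simp only [Finset.mem_univ, if_true]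
  ring

lemma mutT_symm (n : ℕ) (i j : Fin n) : mutT n i j = mutT n j i := by
  rcases eq_or_ne i j with rfl | h
  · rfl
  · simp only [mutT, Matrix.of_apply, if_neg h, if_neg h.symm]
    by_cases h1 : (i : ℕ) + 1 = (j : ℕ) <;> by_cases h2 : (j : ℕ) + 1 = (i : ℕ) <;>
      simp [h1, h2]

lemma mutT_diag (n : ℕ) (i : Fin n) :
    mutT n i i = -((if 0 < (i : ℕ) then (1:ℝ) else 0) + (if (i : ℕ) + 1 < n then (1:ℝ) else 0)) := by
  rw [mutT_decomp, if_neg (by omega), if_pos rfl, zero_add]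

lemma Bmat_apply (n : ℕ) (m a : Fin n → ℝ) (u ε : ℝ) (i j : Fin n) :
    Bmat n m a 1 u ε i j
      = (if i = j then monod (m i) (a i) 1 - u else 0) + ε * mutT n i j := by
  simp only [Bmat, Matrix.add_apply, Matrix.sub_apply, Matrix.smul_apply, Matrix.diagonal_apply,
    Matrix.one_apply, smul_eq_mul]
  rcases eq_or_ne i j with rfl | h
  · simp
  · simp [h]

lemma Bmat_offdiag (n : ℕ) (m a : Fin n → ℝ) (u ε : ℝ) {i j : Fin n} (hij : i ≠ j) :
    Bmat n m a 1 u ε i j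
      = ε * (if ((i : ℕ) + 1 = (j : ℕ) ∨ (j : ℕ) + 1 = (i : ℕ)) then (1:ℝ) else 0) := by
  rw [Bmat_apply, if_neg hij, zero_add, mutT_decomp, if_neg hij, add_zero]

lemma Bmat_radius (n : ℕ) (m a : Fin n → ℝ) (u ε : ℝ) (hε : 0 < ε) (i : Fin n) :
    ∑ j ∈ Finset.univ.erase i, ‖Bmat n m a 1 u ε i j‖
      = ε * ((if 0 < (i : ℕ) then (1:ℝ) else 0) + (if (i : ℕ) + 1 < n then (1:ℝ) else 0)) := by
  have h1 : ∀ j ∈ Finset.univ.erase i, ‖Bmat n m a 1 u ε i j‖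
      = ε * (if ((i : ℕ) + 1 = (j : ℕ) ∨ (j : ℕ) + 1 = (i : ℕ)) then (1:ℝ) else 0) := by
    intro j hj
    rw [Bmat_offdiag n m a u ε (Finset.ne_of_mem_erase hj).symm, Real.norm_eq_abs,
      abs_of_nonneg (by positivity)]
  rw [Finset.sum_congr rfl h1, Finset.sum_erase _ (by simp), ← Finset.mul_sum, sum_nbr]

lemma Bmat_row_sum (n : ℕ) (m a : Fin n → ℝ) (u ε : ℝ) (i : Fin n) :
    ∑ j, Bmat n m a 1 u ε i j = monod (m i) (a i) 1 - u := by
  simp only [Bmat_apply, Finset.sum_add_distrib, ← Finset.mul_sum, mutT_row_sum, mul_zero,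
    add_zero]
  rw [Finset.sum_ite_eq Finset.univ i]
  simp

lemma Bmat_herm (n : ℕ) (m a : Fin n → ℝ) (u ε : ℝ) : (Bmat n m a 1 u ε).IsHermitian := by
  rw [Matrix.IsHermitian]
  ext i j
  rw [Matrix.conjTranspose_apply, star_trivial, Bmat_apply, Bmat_apply, mutT_symm]
  rcases eq_or_ne i j with rfl | h
  · rfl
  · rw [if_neg h, if_neg h.symm]


/-- bounds on `λ(B(1,u,ε))`:
`max(μ̂(1) - u - 2ε, μ̄(1) - u) ≤ λ(B(1,u,ε)) ≤ μ̂(1) - u`. -/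
theorem stmt_9 (n : ℕ) (hn : 1 ≤ n) (m a : Fin n → ℝ)
    (hm : ∀ i, 0 < m i) (ha : ∀ i, 0 < a i)
    (ε u : ℝ) (hε : 0 < ε) (hu : 0 < u) :
    max ((⨆ j : Fin n, monod (m j) (a j) 1) - u - 2 * ε)
        ((1 / (n : ℝ)) * (∑ j, monod (m j) (a j) 1) - u)
      ≤ maxEig (Bmat n m a 1 u ε) ∧
    maxEig (Bmat n m a 1 u ε) ≤ (⨆ j : Fin n, monod (m j) (a j) 1) - u := by
  classical
  haveI : NeZero n := ⟨by omega⟩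
  have hn0 : (0:ℝ) < n := by exact_mod_cast hn
  set A := Bmat n m a 1 u ε with hAdef
  set M := ⨆ j : Fin n, monod (m j) (a j) 1 with hM
  have hbr : BddAbove (Set.range fun j : Fin n => monod (m j) (a j) 1) :=
    Set.Finite.bddAbove (Set.finite_range _)
  have hμM : ∀ i : Fin n, monod (m i) (a i) 1 ≤ M := fun i => le_ciSup hbr i
  set S := {t : ℝ | ∃ v : Fin n → ℝ, v ≠ 0 ∧ A.mulVec v = t • v} with hSdef
  have hmaxEig : maxEig A = sSup S := rfl
  -- Gershgorin upper bound
  have hub : ∀ t ∈ S, t ≤ M - u := by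
    rintro t ⟨v, hv, hveq⟩
    have hev : Module.End.HasEigenvalue (Matrix.toLin' A) t :=
      Module.End.hasEigenvalue_of_hasEigenvector
        ⟨Module.End.mem_eigenspace_iff.2 (by rw [Matrix.toLin'_apply, hveq]), hv⟩
    obtain ⟨k, hk⟩ := eigenvalue_mem_ball hev
    rw [Metric.mem_closedBall, Real.dist_eq] at hk
    have h2 : t ≤ A k k + ∑ j ∈ Finset.univ.erase k, ‖A k j‖ := by
      have := (abs_le.1 hk).2; linarith
    have hdiag : A k k = monod (m k) (a k) 1 - u + ε * mutT n k k := by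
      rw [hAdef, Bmat_apply, if_pos rfl]
    rw [hdiag, mutT_diag] at h2
    have h3 : (∑ j ∈ Finset.univ.erase k, ‖A k j‖)
        = ε * ((if 0 < (k : ℕ) then (1:ℝ) else 0) + (if (k : ℕ) + 1 < n then (1:ℝ) else 0)) :=
      Bmat_radius n m a u ε hε k
    rw [h3] at h2
    have h4 := hμM k
    set d := (if 0 < (k : ℕ) then (1:ℝ) else 0) + (if (k : ℕ) + 1 < n then (1:ℝ) else 0)
    linarith [h2]
  have hSbdd : BddAbove S := ⟨M - u, hub⟩
  -- Rayleigh quotient setup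
  set L : EuclideanSpace ℝ (Fin n) →ₗ[ℝ] EuclideanSpace ℝ (Fin n) := Matrix.toEuclideanLin A
    with hLdef
  have hsym : L.IsSymmetric := Matrix.isHermitian_iff_isSymmetric.mp (Bmat_herm n m a u ε)
  have hlam := hsym.hasEigenvalue_iSup_of_finiteDimensional
  set lam := (⨆ x : { x : EuclideanSpace ℝ (Fin n) // x ≠ 0 },
      RCLike.re (inner ℝ (L x) (x : EuclideanSpace ℝ (Fin n)) : ℝ) /
        ‖(x : EuclideanSpace ℝ (Fin n))‖ ^ 2 : ℝ) with hlamdef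
  have hlamS : lam ∈ S := by
    obtain ⟨v, hv1, hv0⟩ := hlam.exists_hasEigenvector
    refine ⟨v, by simpa using hv0, ?_⟩
    have := Module.End.mem_eigenspace_iff.1 hv1
    simpa [hLdef, Matrix.toEuclideanLin_apply] using congrArg WithLp.ofLp this
  have hlam_le : lam ≤ maxEig A := by
    rw [hmaxEig]; exact le_csSup hSbdd hlamS
  -- bddAbove of the rayleigh range
  have hbddR : BddAbove (Set.range fun x : { x : EuclideanSpace ℝ (Fin n) // x ≠ 0 } =>
      RCLike.re (inner ℝ (L x) (x : EuclideanSpace ℝ (Fin n)) : ℝ) /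
        ‖(x : EuclideanSpace ℝ (Fin n))‖ ^ 2) := by
    refine ⟨‖LinearMap.toContinuousLinearMap L‖, ?_⟩
    rintro r ⟨x, rfl⟩
    have hx0 : (0:ℝ) < ‖(x : EuclideanSpace ℝ (Fin n))‖ := norm_pos_iff.2 x.2
    have h1 : (inner ℝ (L x) (x : EuclideanSpace ℝ (Fin n)) : ℝ)
        ≤ ‖L x‖ * ‖(x : EuclideanSpace ℝ (Fin n))‖ := real_inner_le_norm _ _
    have h2 : ‖L ↑x‖ ≤ ‖LinearMap.toContinuousLinearMap L‖ * ‖(x : EuclideanSpace ℝ (Fin n))‖ :=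
      (LinearMap.toContinuousLinearMap L).le_opNorm x
    simp only [RCLike.re_to_real]
    rw [div_le_iff₀ (by positivity)]
    nlinarith [norm_nonneg (L ↑x)]
  have hray : ∀ x : EuclideanSpace ℝ (Fin n), x ≠ 0 →
      (inner ℝ (L x) x : ℝ) / ‖x‖ ^ 2 ≤ lam := by
    intro x hx
    have := le_ciSup hbddR (⟨x, hx⟩ : { x : EuclideanSpace ℝ (Fin n) // x ≠ 0 })
    rw [hlamdef]; simpa using this
  -- test vector 1 : all ones
  have hones : (1 / (n : ℝ)) * (∑ j, monod (m j) (a j) 1) - u ≤ lam := by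
    set o : EuclideanSpace ℝ (Fin n) := (WithLp.equiv 2 (Fin n → ℝ)).symm (fun _ => (1:ℝ))
      with hodef
    have ho0 : o ≠ 0 := by
      intro h
      have h1 : o ⟨0, by omega⟩ = 0 := by rw [h]; rfl
      have h2 : o ⟨0, by omega⟩ = 1 := rfl
      rw [h2] at h1; exact one_ne_zero h1
    have hLo : ∀ i, L o i = ∑ j, A i j := by
      intro i
      show (A *ᵥ fun _ => (1:ℝ)) i = _
      simp [Matrix.mulVec, dotProduct]
    have hinner : (inner ℝ (L o) o : ℝ) = (∑ j, monod (m j) (a j) 1) - n * u := by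
      rw [PiLp.inner_apply]
      simp only [RCLike.inner_apply, starRingEnd_apply, star_trivial]
      have : ∀ i : Fin n, L o i * o i = monod (m i) (a i) 1 - u := by
        intro i
        have ho1 : o i = 1 := rfl
        rw [ho1, mul_one, hLo i]
        exact Bmat_row_sum n m a u ε i
      rw [Finset.sum_congr rfl fun i _ => (mul_comm _ _).trans (this i), Finset.sum_sub_distrib]
      simp [mul_comm]
    have hnorm : ‖o‖ ^ 2 = n := by
      rw [← real_inner_self_eq_norm_sq, PiLp.inner_apply]
      simp only [RCLike.inner_apply, starRingEnd_apply, star_trivial,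
        show ∀ x : Fin n, o x = (1:ℝ) from fun _ => rfl, mul_one, Finset.sum_const,
        Finset.card_univ, Fintype.card_fin, nsmul_eq_mul]
    have := hray o ho0
    rw [hinner, hnorm] at this
    calc (1 / (n : ℝ)) * (∑ j, monod (m j) (a j) 1) - u
        = ((∑ j, monod (m j) (a j) 1) - n * u) / n := by field_simp
      _ ≤ lam := this
  -- test vector 2 : basis vector at the argmax
  have hbasis : M - u - 2 * ε ≤ lam := by
    obtain ⟨k, hk⟩ := exists_eq_ciSup_of_finite (f := fun j : Fin n => monod (m j) (a j) 1)
    set e : EuclideanSpace ℝ (Fin n) := EuclideanSpace.single k 1 with hedef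
    have he0 : e ≠ 0 := by
      intro h
      have := congrFun (congrArg (WithLp.equiv 2 (Fin n → ℝ)) h) k
      simpa [hedef] using this
    have hnorm : ‖e‖ ^ 2 = 1 := by
      rw [EuclideanSpace.norm_single]; norm_num
    have hLe : L e k = A k k := by
      show (A *ᵥ Pi.single k (1:ℝ)) k = _
      simp [Matrix.mulVec_single]
    have hinner : (inner ℝ (L e) e : ℝ) = A k k := by
      rw [PiLp.inner_apply]
      simp only [RCLike.inner_apply, starRingEnd_apply, star_trivial]
      rw [Finset.sum_eq_single k]
      · have he1 : e k = 1 := by simp [hedef, EuclideanSpace.single_apply]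
        rw [he1, one_mul, hLe]
      · intro j _ hj
        have : e j = 0 := by simp [hedef, EuclideanSpace.single_apply, hj]
        rw [this, zero_mul]
      · simp
    have := hray e he0
    rw [hinner, hnorm, div_one] at this
    have hAkk : A k k = monod (m k) (a k) 1 - u + ε * mutT n k k := by
      rw [hAdef, Bmat_apply, if_pos rfl]
    have hd : mutT n k k ≥ -2 := by
      rw [mutT_diag]
      by_cases h1 : 0 < (k:ℕ) <;> by_cases h2 : (k:ℕ)+1 < n <;> simp [h1, h2] <;> norm_num
    have hMk : monod (m k) (a k) 1 = M := hk
    nlinarith [this, hε]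
  have hSne : S.Nonempty := ⟨lam, hlamS⟩
  constructor
  · exact max_le (le_trans hbasis hlam_le) (le_trans hones hlam_le)
  · rw [hmaxEig]; exact csSup_le hSne hub
end
end

section
/- The function ε ↦ u_c(ε) := λ(diag(μ_1(1),…,μ_n(1)) + ε T) is non-increasing on [0,∞). Moreover u_c(0) = max_{1≤j≤n} μ_j(1), and u_c(ε) → (1/n) Σ_{j=1}^n μ_j(1) as ε → +∞. -/
open Matrix Filter Set Topology Asymptotics

noncomputable section

section Aux
variable {n : ℕ}

def incD (n : ℕ) : Matrix (Fin (n - 1)) (Fin n) ℝ :=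
  Matrix.of fun e j =>
    (if (j : ℕ) = (e : ℕ) + 1 then 1 else 0) - (if (j : ℕ) = (e : ℕ) then 1 else 0)

lemma ite_mul_expand (p q r s : Prop) [Decidable p] [Decidable q] [Decidable r] [Decidable s] :
    ((if p then (1:ℝ) else 0) - (if q then 1 else 0)) *
      ((if r then (1:ℝ) else 0) - (if s then 1 else 0))
    = (if p ∧ r then 1 else 0) + (if q ∧ s then 1 else 0)
      - (if p ∧ s then 1 else 0) - (if q ∧ r then 1 else 0) := by
  by_cases hp : p <;> by_cases hq : q <;> by_cases hr : r <;> by_cases hs : s <;> simp_all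

lemma mutT_eq (n : ℕ) : mutT n = -((incD n)ᵀ * incD n) := by
  have key : ∀ (k : ℕ), k < n - 1 → ∀ (P : Fin (n-1) → Prop) (_ : DecidablePred P),
      (∀ e : Fin (n-1), P e ↔ k = (e:ℕ)) →
      (∑ e : Fin (n-1), (if P e then (1:ℝ) else 0)) = 1 := by
    intro k hk P inst hP
    have h : (∑ e : Fin (n-1), (if P e then (1:ℝ) else 0))
        = ∑ e : Fin (n-1), (if k = (e:ℕ) then (1:ℝ) else 0) := by
      refine Finset.sum_congr rfl fun e _ => ?_
      by_cases h : P e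
      · rw [if_pos h, if_pos ((hP e).1 h)]
      · rw [if_neg h, if_neg (fun hh => h ((hP e).2 hh))]
    rw [h, Finset.sum_eq_single ⟨k, hk⟩]
    · simp
    · intro b _ hb
      rw [if_neg]; intro hkb; exact hb (by ext; simp [hkb])
    · simp
  have zero : ∀ (P : Fin (n-1) → Prop) (_ : DecidablePred P), (∀ e, ¬ P e) →
      (∑ e : Fin (n-1), (if P e then (1:ℝ) else 0)) = 0 := by
    intro P inst hP
    exact Finset.sum_eq_zero fun e _ => if_neg (hP e)
  ext i j
  have hi := i.2; have hj := j.2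
  simp only [mutT, incD, Matrix.neg_apply, Matrix.mul_apply, Matrix.transpose_apply, of_apply]
  have expand : ∀ e : Fin (n-1),
      ((if (i : ℕ) = (e : ℕ) + 1 then (1:ℝ) else 0) - (if (i : ℕ) = (e : ℕ) then 1 else 0)) *
      ((if (j : ℕ) = (e : ℕ) + 1 then (1:ℝ) else 0) - (if (j : ℕ) = (e : ℕ) then 1 else 0))
      = (if (i:ℕ) = (e:ℕ)+1 ∧ (j:ℕ) = (e:ℕ)+1 then 1 else 0)
        + (if (i:ℕ) = (e:ℕ) ∧ (j:ℕ) = (e:ℕ) then 1 else 0)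
        - (if (i:ℕ) = (e:ℕ)+1 ∧ (j:ℕ) = (e:ℕ) then 1 else 0)
        - (if (i:ℕ) = (e:ℕ) ∧ (j:ℕ) = (e:ℕ)+1 then 1 else 0) :=
    fun e => ite_mul_expand _ _ _ _
  simp only [expand]
  rw [Finset.sum_sub_distrib, Finset.sum_sub_distrib, Finset.sum_add_distrib]
  by_cases h1 : (i:ℕ) + 1 = (j:ℕ)
  · rw [if_pos (Or.inl h1)]
    rw [zero _ _ (fun e => by have := e.2; omega),
        zero _ _ (fun e => by have := e.2; omega),
        zero _ _ (fun e => by have := e.2; omega),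
        key (i:ℕ) (by omega) _ _ (fun e => by have := e.2; omega)]
    ring
  · by_cases h2 : (j:ℕ) + 1 = (i:ℕ)
    · rw [if_pos (Or.inr h2)]
      rw [zero _ _ (fun e => by have := e.2; omega),
          zero _ _ (fun e => by have := e.2; omega),
          key (j:ℕ) (by omega) _ _ (fun e => by have := e.2; omega),
          zero _ _ (fun e => by have := e.2; omega)]
      ring
    · rw [if_neg (by tauto)]
      by_cases h3 : i = j
      · rw [if_pos h3]
        have h3' : (i:ℕ) = (j:ℕ) := by rw [h3]
        rw [zero (fun e : Fin (n-1) => (i:ℕ) = (e:ℕ)+1 ∧ (j:ℕ) = (e:ℕ)) inferInstance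
              (fun e => by omega),
            zero (fun e : Fin (n-1) => (i:ℕ) = (e:ℕ) ∧ (j:ℕ) = (e:ℕ)+1) inferInstance
              (fun e => by omega)]
        by_cases h4 : 0 < (i:ℕ)
        · rw [key ((i:ℕ)-1) (by omega)
              (fun e : Fin (n-1) => (i:ℕ) = (e:ℕ)+1 ∧ (j:ℕ) = (e:ℕ)+1) inferInstance
              (fun e => by have := e.2; omega), if_pos h4]
          by_cases h5 : (i:ℕ)+1 < n
          · rw [key (i:ℕ) (by omega)
                (fun e : Fin (n-1) => (i:ℕ) = (e:ℕ) ∧ (j:ℕ) = (e:ℕ)) inferInstance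
                (fun e => by have := e.2; omega), if_pos h5]
            ring
          · rw [zero (fun e : Fin (n-1) => (i:ℕ) = (e:ℕ) ∧ (j:ℕ) = (e:ℕ)) inferInstance
                (fun e => by have := e.2; omega), if_neg h5]
            ring
        · rw [zero (fun e : Fin (n-1) => (i:ℕ) = (e:ℕ)+1 ∧ (j:ℕ) = (e:ℕ)+1) inferInstance
              (fun e => by omega), if_neg h4]
          by_cases h5 : (i:ℕ)+1 < n
          · rw [key (i:ℕ) (by omega)
                (fun e : Fin (n-1) => (i:ℕ) = (e:ℕ) ∧ (j:ℕ) = (e:ℕ)) inferInstance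
                (fun e => by have := e.2; omega), if_pos h5]
            ring
          · rw [zero (fun e : Fin (n-1) => (i:ℕ) = (e:ℕ) ∧ (j:ℕ) = (e:ℕ)) inferInstance
                (fun e => by have := e.2; omega), if_neg h5]
            ring
      · rw [if_neg h3]
        have h3' : (i:ℕ) ≠ (j:ℕ) := fun h => h3 (by ext; exact h)
        rw [zero _ _ (fun e => by omega), zero _ _ (fun e => by omega),
            zero _ _ (fun e => by omega), zero _ _ (fun e => by omega)]
        ring

lemma pick_sum (v : Fin n → ℝ) (k : ℕ) (hk : k < n) :
    (∑ j : Fin n, (if (j:ℕ) = k then (1:ℝ) else 0) * v j) = v ⟨k, hk⟩ := by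
  rw [Finset.sum_eq_single ⟨k, hk⟩]
  · simp
  · intro b _ hb
    rw [if_neg, zero_mul]
    intro hkb; exact hb (by ext; simp [hkb])
  · simp

lemma incD_mulVec (v : Fin n → ℝ) (e : Fin (n-1)) :
    ((incD n) *ᵥ v) e
      = v ⟨(e:ℕ)+1, by have := e.2; omega⟩ - v ⟨(e:ℕ), by have := e.2; omega⟩ := by
  have he := e.2
  simp only [incD, Matrix.mulVec, dotProduct, of_apply, sub_mul]
  rw [Finset.sum_sub_distrib, pick_sum v ((e:ℕ)+1) (by omega), pick_sum v (e:ℕ) (by omega)]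

lemma mutT_mulVec (v : Fin n → ℝ) :
    (mutT n) *ᵥ v = -((incD n)ᵀ *ᵥ ((incD n) *ᵥ v)) := by
  rw [mutT_eq, Matrix.neg_mulVec, Matrix.mulVec_mulVec]

lemma quad_eq (v : Fin n → ℝ) :
    v ⬝ᵥ (mutT n *ᵥ v) = -(((incD n) *ᵥ v) ⬝ᵥ ((incD n) *ᵥ v)) := by
  rw [mutT_mulVec, dotProduct_neg, dotProduct_mulVec, vecMul_transpose]

lemma quad_nonpos (v : Fin n → ℝ) : v ⬝ᵥ (mutT n *ᵥ v) ≤ 0 := by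
  rw [quad_eq, neg_nonpos]
  exact Finset.sum_nonneg fun i _ => mul_self_nonneg _

lemma mutT_mulVec_const (c : ℝ) : mutT n *ᵥ (fun _ => c) = 0 := by
  rw [mutT_mulVec]
  have h : (incD n) *ᵥ (fun _ => c) = 0 := funext fun e => by
    rw [incD_mulVec]; simp
  rw [h, Matrix.mulVec_zero, neg_zero]

lemma eq_const_of_quad_zero (hn : 0 < n) (v : Fin n → ℝ)
    (h : v ⬝ᵥ (mutT n *ᵥ v) = 0) : ∀ i : Fin n, v i = v ⟨0, hn⟩ := by
  rw [quad_eq, neg_eq_zero] at h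
  have hD : (incD n) *ᵥ v = 0 := dotProduct_self_eq_zero.mp h
  have step : ∀ k : ℕ, ∀ hk : k + 1 < n, v ⟨k+1, hk⟩ = v ⟨k, by omega⟩ := by
    intro k hk
    have he : k < n - 1 := by omega
    have := congrFun hD ⟨k, he⟩
    rw [incD_mulVec] at this
    simpa [sub_eq_zero] using this
  intro i
  obtain ⟨k, hk⟩ := i
  induction k with
  | zero => rfl
  | succ k ih => rw [step k hk, ih (by omega)]

lemma mutT_isHermitian : (mutT n).IsHermitian := by
  rw [mutT_eq]
  have h1 : ((incD n)ᵀ * incD n).IsHermitian := by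
    have := Matrix.isHermitian_conjTranspose_mul_self (incD n)
    have he : (incD n)ᴴ = (incD n)ᵀ := Matrix.conjTranspose_eq_transpose_of_trivial _
    rwa [he] at this
  exact h1.neg

lemma maxEig_diagonal (hn : 0 < n) (d : Fin n → ℝ) :
    maxEig (Matrix.diagonal d) = ⨆ j, d j := by
  have hset : {t : ℝ | ∃ v : Fin n → ℝ, v ≠ 0 ∧ (Matrix.diagonal d) *ᵥ v = t • v}
      = Set.range d := by
    ext t
    constructor
    · rintro ⟨v, hv, he⟩
      obtain ⟨i, hi⟩ : ∃ i, v i ≠ 0 := by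
        by_contra h; push_neg at h; exact hv (funext h)
      have h2 := congrFun he i
      rw [Matrix.mulVec_diagonal] at h2
      refine ⟨i, ?_⟩
      have : (d i - t) * v i = 0 := by
        have : t * v i = d i * v i := h2.symm
        ring_nf
        linarith [h2]
      rcases mul_eq_zero.mp this with h | h
      · linarith [sub_eq_zero.mp h]
      · exact absurd h hi
    · rintro ⟨i, rfl⟩
      refine ⟨Pi.single i 1, ?_, ?_⟩
      · intro h
        have := congrFun h i
        simp at this
      · funext j
        rw [Matrix.mulVec_diagonal]
        by_cases h : j = i
        · subst h; simp
        · simp [Pi.single_apply, h]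
  unfold maxEig
  rw [hset]
  rfl

lemma rayleigh_bddAbove (A : Matrix (Fin n) (Fin n) ℝ) :
    BddAbove (Set.range fun x : {x : EuclideanSpace ℝ (Fin n) // x ≠ 0} =>
      (inner ℝ (Matrix.toEuclideanLin A x) (x : EuclideanSpace ℝ (Fin n)) : ℝ) /
        ‖(x : EuclideanSpace ℝ (Fin n))‖ ^ 2) := by
  set L := Matrix.toEuclideanLin A
  set Lc := LinearMap.toContinuousLinearMap L
  refine ⟨‖Lc‖, ?_⟩
  rintro t ⟨x, rfl⟩
  have hx : (0:ℝ) < ‖(x : EuclideanSpace ℝ (Fin n))‖ := by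
    simpa [norm_pos_iff] using x.2
  rw [div_le_iff₀ (by positivity)]
  calc (inner ℝ (L x) (x:EuclideanSpace ℝ (Fin n)) : ℝ)
      ≤ ‖L (x:EuclideanSpace ℝ (Fin n))‖ * ‖(x:EuclideanSpace ℝ (Fin n))‖ :=
        real_inner_le_norm _ _
    _ ≤ (‖Lc‖ * ‖(x:EuclideanSpace ℝ (Fin n))‖) * ‖(x:EuclideanSpace ℝ (Fin n))‖ := by
        have := Lc.le_opNorm (x:EuclideanSpace ℝ (Fin n))
        exact mul_le_mul_of_nonneg_right (by exact this) (norm_nonneg _)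
    _ = ‖Lc‖ * ‖(x:EuclideanSpace ℝ (Fin n))‖ ^ 2 := by ring

lemma maxEig_spec (hn : 1 ≤ n) (A : Matrix (Fin n) (Fin n) ℝ) (hA : A.IsHermitian) :
    maxEig A = ⨆ x : {x : EuclideanSpace ℝ (Fin n) // x ≠ 0},
      (inner ℝ (Matrix.toEuclideanLin A x) (x : EuclideanSpace ℝ (Fin n)) : ℝ) /
        ‖(x : EuclideanSpace ℝ (Fin n))‖ ^ 2 := by
  haveI : Nonempty (Fin n) := ⟨⟨0, hn⟩⟩
  haveI : Nontrivial (EuclideanSpace ℝ (Fin n)) := inferInstance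
  set L := Matrix.toEuclideanLin A with hL
  have hsym : L.IsSymmetric := Matrix.isHermitian_iff_isSymmetric.mp hA
  set R : ℝ := ⨆ x : {x : EuclideanSpace ℝ (Fin n) // x ≠ 0},
      (inner ℝ (L x) (x : EuclideanSpace ℝ (Fin n)) : ℝ) / ‖(x : EuclideanSpace ℝ (Fin n))‖ ^ 2
    with hR
  apply IsGreatest.csSup_eq
  constructor
  · have h := hsym.hasEigenvalue_iSup_of_finiteDimensional
    have hRe : (⨆ x : {x : EuclideanSpace ℝ (Fin n) // x ≠ 0},
        RCLike.re (inner ℝ (L x) (x : EuclideanSpace ℝ (Fin n)) : ℝ) /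
          ‖(x : EuclideanSpace ℝ (Fin n))‖ ^ 2) = R := by
      rw [hR]
      congr 1
    rw [hRe] at h
    obtain ⟨v, hv⟩ := h.exists_hasEigenvector
    refine ⟨WithLp.equiv 2 _ v, ?_, ?_⟩
    · simpa using hv.right
    · have h1 : L v = R • v := by
        have := hv.apply_eq_smul
        simpa using this
      have h2 : A.mulVec (WithLp.equiv 2 _ v) = WithLp.equiv 2 _ (L v) := rfl
      rw [h2, h1]
      rfl
  · rintro t ⟨v, hv0, hvt⟩
    set x : EuclideanSpace ℝ (Fin n) := (WithLp.equiv 2 _).symm v with hx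
    have hx0 : x ≠ 0 := by simpa [hx] using hv0
    have hLx : L x = t • x := by
      rw [hL, Matrix.toEuclideanLin_apply]
      show (WithLp.equiv 2 _).symm (A.mulVec v) = _
      rw [hvt]
      rfl
    have hin : (inner ℝ (L x) x : ℝ) = t * ‖x‖ ^ 2 := by
      rw [hLx, real_inner_smul_left, real_inner_self_eq_norm_sq]
    have hxpos : (0:ℝ) < ‖x‖ := norm_pos_iff.mpr hx0
    have hnx : (0:ℝ) < ‖x‖ ^ 2 := by positivity
    have : t = (inner ℝ (L x) x : ℝ) / ‖x‖ ^ 2 := by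
      rw [hin]; field_simp
    rw [this, hR]
    exact le_ciSup (rayleigh_bddAbove A) (⟨x, hx0⟩ : {x : EuclideanSpace ℝ (Fin n) // x ≠ 0})

lemma inner_toEuclideanLin (M : Matrix (Fin n) (Fin n) ℝ) (x : EuclideanSpace ℝ (Fin n)) :
    (inner ℝ (Matrix.toEuclideanLin M x) x : ℝ)
      = (WithLp.equiv 2 (Fin n → ℝ) x) ⬝ᵥ (M *ᵥ (WithLp.equiv 2 (Fin n → ℝ) x)) := by
  simp [PiLp.inner_apply, Matrix.toEuclideanLin_apply, dotProduct, RCLike.inner_apply, mul_comm]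

lemma norm_sq_eq_dot (x : EuclideanSpace ℝ (Fin n)) :
    ‖x‖^2 = (WithLp.equiv 2 (Fin n → ℝ) x) ⬝ᵥ (WithLp.equiv 2 (Fin n → ℝ) x) := by
  rw [← real_inner_self_eq_norm_sq]
  simp [PiLp.inner_apply, dotProduct, RCLike.inner_apply]
  rw [EuclideanSpace.norm_eq, Real.sq_sqrt (Finset.sum_nonneg fun i _ => sq_nonneg _)]
  exact Finset.sum_congr rfl fun i _ => by rw [Real.norm_eq_abs, sq_abs, sq]

lemma gap (hn : 0 < n) : ∃ γ : ℝ, 0 < γ ∧ ∀ w : Fin n → ℝ,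
    (∑ i, w i = 0) → w ⬝ᵥ (mutT n *ᵥ w) ≤ -γ * (w ⬝ᵥ w) := by
  rcases eq_or_lt_of_le (show 1 ≤ n from hn) with h1 | h2
  · -- n = 1
    refine ⟨1, one_pos, fun w hw => ?_⟩
    have hn1 : n = 1 := h1.symm
    subst hn1
    have hw0 : w = 0 := by
      funext i
      have : i = ⟨0, hn⟩ := Subsingleton.elim _ _
      rw [this]
      simpa using hw
    simp [hw0]
  · -- n ≥ 2
    set Tlin := Matrix.toEuclideanLin (mutT n) with hTlin
    set f : EuclideanSpace ℝ (Fin n) → ℝ := fun x => -(inner ℝ (Tlin x) x : ℝ) with hf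
    have hf_cont : Continuous f := by
      have hc : Continuous Tlin := Tlin.continuous_of_finiteDimensional
      exact (hc.inner continuous_id).neg
    set K : Set (EuclideanSpace ℝ (Fin n)) :=
      Metric.sphere 0 1 ∩ {x | ∑ i, x i = 0} with hK
    have hK_compact : IsCompact K := by
      apply (isCompact_sphere (0 : EuclideanSpace ℝ (Fin n)) 1).inter_right
      have : Continuous fun x : EuclideanSpace ℝ (Fin n) => ∑ i, x i :=
        continuous_finset_sum _ fun i _ => (EuclideanSpace.proj i).continuous
      exact isClosed_eq this continuous_const
    have hK_ne : K.Nonempty := by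
      have h01 : (⟨0, by omega⟩ : Fin n) ≠ ⟨1, by omega⟩ := by
        intro h; simpa using congrArg Fin.val h
      set c : ℝ := (Real.sqrt 2)⁻¹ with hc
      have hc_pos : 0 < c := by positivity
      set v : Fin n → ℝ := fun j => if j = ⟨0, by omega⟩ then c else if j = ⟨1, by omega⟩ then -c else 0
        with hv
      refine ⟨(WithLp.equiv 2 (Fin n → ℝ)).symm v, ?_, ?_⟩
      · simp only [Metric.mem_sphere, dist_zero_right]
        rw [EuclideanSpace.norm_eq]
        have hsum : (∑ i : Fin n, ‖((WithLp.equiv 2 (Fin n → ℝ)).symm v) i‖^2) = 2 * c^2 := by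
          have hptw : ∀ i : Fin n, ‖((WithLp.equiv 2 (Fin n → ℝ)).symm v) i‖^2
              = (if i = ⟨0, by omega⟩ then c^2 else 0) + (if i = ⟨1, by omega⟩ then c^2 else 0) := by
            intro i
            show ‖v i‖^2 = _
            rw [hv]
            beta_reduce
            by_cases h0 : i = ⟨0, by omega⟩
            · rw [if_pos h0, if_pos h0, if_neg (by rw [h0]; exact h01), add_zero]
              simp [sq_abs]
            · rw [if_neg h0, if_neg h0, zero_add]
              by_cases h1 : i = ⟨1, by omega⟩
              · rw [if_pos h1, if_pos h1]; simp [sq_abs]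
              · rw [if_neg h1, if_neg h1]; simp
          rw [Finset.sum_congr rfl fun i _ => hptw i, Finset.sum_add_distrib,
            Finset.sum_ite_eq' _ _ (fun _ => c^2), Finset.sum_ite_eq' _ _ (fun _ => c^2)]
          simp only [Finset.mem_univ, if_true]
          ring
        rw [hsum, hc]
        rw [show (2:ℝ) * ((Real.sqrt 2)⁻¹)^2 = 1 by
          rw [inv_pow, Real.sq_sqrt (by norm_num : (0:ℝ) ≤ 2)]; norm_num]
        exact Real.sqrt_one
      · show (∑ i, v i) = 0
        have hptw : ∀ i : Fin n, v i
            = (if i = ⟨0, by omega⟩ then c else 0) + (if i = ⟨1, by omega⟩ then -c else 0) := by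
          intro i
          rw [hv]; beta_reduce
          by_cases h0 : i = ⟨0, by omega⟩
          · rw [if_pos h0, if_pos h0, if_neg (by rw [h0]; exact h01), add_zero]
          · rw [if_neg h0, if_neg h0, zero_add]
        rw [Finset.sum_congr rfl fun i _ => hptw i, Finset.sum_add_distrib,
          Finset.sum_ite_eq' _ _ (fun _ => c), Finset.sum_ite_eq' _ _ (fun _ => -c)]
        simp
    obtain ⟨xs, hxsK, hmin⟩ := hK_compact.exists_isMinOn hK_ne hf_cont.continuousOn
    set γ : ℝ := f xs with hγ
    have hxs_norm : ‖xs‖ = 1 := by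
      have := hxsK.1
      simpa [Metric.mem_sphere, dist_zero_right] using this
    have hxs_sum : ∑ i, xs i = 0 := hxsK.2
    have hfq : ∀ y : EuclideanSpace ℝ (Fin n),
        f y = -((WithLp.equiv 2 (Fin n → ℝ) y) ⬝ᵥ (mutT n *ᵥ (WithLp.equiv 2 (Fin n → ℝ) y))) := by
      intro y
      rw [hf]
      beta_reduce
      rw [hTlin, inner_toEuclideanLin]
    have hγ_nonneg : 0 ≤ γ := by
      rw [hγ, hfq, neg_nonneg]
      exact quad_nonpos _
    have hγ_pos : 0 < γ := by
      rcases eq_or_lt_of_le hγ_nonneg with h0 | h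
      · exfalso
        have hq : (WithLp.equiv 2 (Fin n → ℝ) xs) ⬝ᵥ (mutT n *ᵥ (WithLp.equiv 2 (Fin n → ℝ) xs)) = 0 := by
          have := h0.symm
          rw [hγ, hfq, neg_eq_zero] at this
          exact this
        have hconst := eq_const_of_quad_zero hn _ hq
        set c0 : ℝ := (WithLp.equiv 2 (Fin n → ℝ) xs) ⟨0, hn⟩ with hc0
        have hxs_sum' : (∑ i : Fin n, (WithLp.equiv 2 (Fin n → ℝ)) xs i) = 0 := hxs_sum
        have hsum : (∑ i : Fin n, (WithLp.equiv 2 (Fin n → ℝ)) xs i) = (n:ℝ) * c0 := by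
          rw [Finset.sum_congr rfl fun i _ => hconst i]
          simp [Finset.card_univ]
        rw [hxs_sum'] at hsum
        have hc00 : c0 = 0 := by
          have hn' : (n:ℝ) ≠ 0 := Nat.cast_ne_zero.mpr (by omega)
          rcases mul_eq_zero.mp hsum.symm with h | h
          · exact absurd h hn'
          · exact h
        have hxs0 : xs = 0 := by
          ext i
          have := hconst i
          rw [hc00] at this
          exact this
        rw [hxs0] at hxs_norm
        simp at hxs_norm
      · exact h
    refine ⟨γ, hγ_pos, fun w hw => ?_⟩
    by_cases hw0 : w = 0
    · simp [hw0]
    · set xw : EuclideanSpace ℝ (Fin n) := (WithLp.equiv 2 (Fin n → ℝ)).symm w with hxw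
      have hxw0 : xw ≠ 0 := by simpa [hxw] using hw0
      have hnorm : (0:ℝ) < ‖xw‖ := norm_pos_iff.mpr hxw0
      set x : EuclideanSpace ℝ (Fin n) := ‖xw‖⁻¹ • xw with hx
      have hxK : x ∈ K := by
        constructor
        · simp only [Metric.mem_sphere, dist_zero_right, hx, norm_smul, norm_inv, norm_norm]
          field_simp
        · show (∑ i, x i) = 0
          have : ∀ i : Fin n, x i = ‖xw‖⁻¹ * w i := fun i => rfl
          rw [Finset.sum_congr rfl fun i _ => this i, ← Finset.mul_sum, hw, mul_zero]
      have hmin_x : γ ≤ f x := hmin hxK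
      have hfx : f x = ‖xw‖⁻¹^2 * f xw := by
        rw [hf]
        beta_reduce
        rw [hx, _root_.map_smul, real_inner_smul_left, real_inner_smul_right]
        ring
      have hfxw : f xw = -(w ⬝ᵥ (mutT n *ᵥ w)) := by
        rw [hfq]
        congr 1
      have hns : ‖xw‖^2 = w ⬝ᵥ w := by
        rw [norm_sq_eq_dot]
        congr 1
      rw [hfx, hfxw] at hmin_x
      have h2 : γ * ‖xw‖^2 ≤ -(w ⬝ᵥ (mutT n *ᵥ w)) := by
        have hp : (0:ℝ) < ‖xw‖^2 := by positivity
        rw [inv_pow] at hmin_x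
        calc γ * ‖xw‖^2 ≤ ((‖xw‖^2)⁻¹ * -(w ⬝ᵥ (mutT n *ᵥ w))) * ‖xw‖^2 :=
              mul_le_mul_of_nonneg_right hmin_x (le_of_lt hp)
          _ = -(w ⬝ᵥ (mutT n *ᵥ w)) := by field_simp
      rw [hns] at h2
      linarith


lemma Aeps_herm (d : Fin n → ℝ) (ε : ℝ) :
    (Matrix.diagonal d + ε • mutT n).IsHermitian := by
  apply Matrix.IsHermitian.add (Matrix.isHermitian_diagonal d)
  show (ε • mutT n)ᴴ = ε • mutT n
  have h : (mutT n)ᴴ = mutT n := mutT_isHermitian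
  rw [Matrix.conjTranspose_smul, star_trivial, h]

lemma mutT_transpose : (mutT n)ᵀ = mutT n := by
  have h : (mutT n)ᴴ = mutT n := mutT_isHermitian
  rwa [Matrix.conjTranspose_eq_transpose_of_trivial] at h

lemma dot_Aeps (d : Fin n → ℝ) (ε : ℝ) (v : Fin n → ℝ) :
    v ⬝ᵥ ((Matrix.diagonal d + ε • mutT n) *ᵥ v)
      = v ⬝ᵥ (Matrix.diagonal d *ᵥ v) + ε * (v ⬝ᵥ (mutT n *ᵥ v)) := by
  rw [Matrix.add_mulVec, dotProduct_add, Matrix.smul_mulVec, dotProduct_smul, smul_eq_mul]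

lemma dot_diag (d v : Fin n → ℝ) :
    v ⬝ᵥ (Matrix.diagonal d *ᵥ v) = ∑ i, d i * (v i)^2 := by
  simp only [dotProduct, Matrix.mulVec_diagonal]
  exact Finset.sum_congr rfl fun i _ => by ring

lemma amgm (s c w : ℝ) (hs : 0 < s) : 2*c*w ≤ s*c^2 + s⁻¹*w^2 := by
  have h := sq_nonneg (s*c - w)
  have hs' : s ≠ 0 := hs.ne'
  have he : s*(s*c^2 + s⁻¹*w^2 - 2*c*w) = (s*c - w)^2 := by field_simp; ring
  nlinarith [h, hs, he]

lemma e1_aux (P cc nn : ℝ) (hP : 0 ≤ P) (hcc : 0 ≤ cc) (hnn : 1 ≤ nn) :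
    P*cc ≤ P*(nn*cc) := by nlinarith [mul_nonneg (mul_nonneg hP hcc) (by linarith : (0:ℝ) ≤ nn - 1)]

lemma e2_aux (E M W : ℝ) (hW : 0 ≤ W) (hE : 2*M ≤ E) : (E/2)*W + M*W ≤ E*W := by
  nlinarith [mul_nonneg hW (by linarith : (0:ℝ) ≤ E/2 - M)]

end Aux
/-- `ε ↦ u_c(ε) = λ(diag(μ(1)) + εT)` is non-increasing on `[0,∞)`,
`u_c(0) = max_j μ_j(1)`, and `u_c(ε) → (1/n) Σ_j μ_j(1)` as `ε → ∞`. -/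
theorem stmt_10 (n : ℕ) (hn : 1 ≤ n) (m a : Fin n → ℝ)
    (hm : ∀ i, 0 < m i) (ha : ∀ i, 0 < a i) :
    AntitoneOn
      (fun ε : ℝ => maxEig (Matrix.diagonal (fun i => monod (m i) (a i) 1) + ε • mutT n))
      (Set.Ici (0 : ℝ)) ∧
    maxEig (Matrix.diagonal (fun i => monod (m i) (a i) 1) + (0 : ℝ) • mutT n)
      = ⨆ j : Fin n, monod (m j) (a j) 1 ∧
    Tendsto
      (fun ε : ℝ => maxEig (Matrix.diagonal (fun i => monod (m i) (a i) 1) + ε • mutT n))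
      atTop (𝓝 ((1 / (n : ℝ)) * ∑ j, monod (m j) (a j) 1)) := by
  have hpos : 0 < n := hn
  haveI : Nonempty (Fin n) := ⟨⟨0, hn⟩⟩
  haveI : Nontrivial (EuclideanSpace ℝ (Fin n)) := inferInstance
  haveI : Nonempty {x : EuclideanSpace ℝ (Fin n) // x ≠ 0} := nonempty_subtype.mpr (exists_ne 0)
  set d : Fin n → ℝ := fun i => monod (m i) (a i) 1 with hd_def
  have hd : ∀ i, 0 < d i := fun i => by
    show 0 < monod (m i) (a i) 1
    unfold monod
    have h1 := hm i
    have h2 := ha i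
    positivity
  set M : ℝ := ∑ j, d j with hM_def
  have hM : 0 < M := Finset.sum_pos (fun i _ => hd i) ⟨⟨0, hn⟩, Finset.mem_univ _⟩
  have hdM : ∀ i, d i ≤ M :=
    fun i => Finset.single_le_sum (fun j _ => (hd j).le) (Finset.mem_univ i)
  have hnR : (0:ℝ) < (n:ℝ) := Nat.cast_pos.mpr hn
  have h1n : (1:ℝ) ≤ (n:ℝ) := by exact_mod_cast hn
  set avg : ℝ := (1/(n:ℝ)) * M with havg_def
  have havg : 0 < avg := by rw [havg_def]; positivity
  obtain ⟨γ, hγ, hgap⟩ := gap hpos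
  refine ⟨?_, ?_, ?_⟩
  · -- Antitone
    intro ε1 hε1 ε2 hε2 h12
    simp only
    rw [maxEig_spec hpos _ (Aeps_herm d ε1), maxEig_spec hpos _ (Aeps_herm d ε2)]
    apply ciSup_mono (rayleigh_bddAbove _)
    rintro ⟨x, hx0⟩
    have hxn : (0:ℝ) < ‖x‖ := norm_pos_iff.mpr hx0
    have hx2 : (0:ℝ) < ‖x‖^2 := by positivity
    have hnum : (inner ℝ (Matrix.toEuclideanLin (Matrix.diagonal d + ε2 • mutT n) x) x : ℝ)
        ≤ inner ℝ (Matrix.toEuclideanLin (Matrix.diagonal d + ε1 • mutT n) x) x := by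
      rw [inner_toEuclideanLin, inner_toEuclideanLin, dot_Aeps, dot_Aeps]
      have hq := quad_nonpos (WithLp.equiv 2 (Fin n → ℝ) x)
      have hmul := mul_le_mul_of_nonpos_right h12 hq
      linarith
    gcongr
  · -- value at 0
    rw [zero_smul, add_zero, maxEig_diagonal hpos]
  · -- limit
    have hlow : ∀ ε : ℝ, avg ≤ maxEig (Matrix.diagonal d + ε • mutT n) := by
      intro ε
      rw [maxEig_spec hpos _ (Aeps_herm d ε)]
      set x1 : EuclideanSpace ℝ (Fin n) := (WithLp.equiv 2 (Fin n → ℝ)).symm (fun _ => (1:ℝ))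
        with hx1_def
      have hx10 : x1 ≠ 0 := by
        intro h
        have h2 : (fun _ : Fin n => (1:ℝ)) = 0 := by
          have := congrArg (WithLp.equiv 2 (Fin n → ℝ)) h
          simpa [hx1_def] using this
        have := congrFun h2 ⟨0, hpos⟩
        simp at this
      have hval : (inner ℝ (Matrix.toEuclideanLin (Matrix.diagonal d + ε • mutT n) x1) x1 : ℝ)
          / ‖x1‖^2 = avg := by
        rw [inner_toEuclideanLin, norm_sq_eq_dot]
        have hev : WithLp.equiv 2 (Fin n → ℝ) x1 = fun _ => (1:ℝ) := rfl
        rw [hev, dot_Aeps, dot_diag, mutT_mulVec_const, dotProduct_zero, mul_zero, add_zero]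
        have h1 : (∑ i, d i * (1:ℝ)^2) = M := by
          rw [hM_def]; exact Finset.sum_congr rfl fun i _ => by ring
        have h2 : ((fun _ : Fin n => (1:ℝ)) ⬝ᵥ (fun _ : Fin n => (1:ℝ))) = (n:ℝ) := by
          simp [dotProduct]
        rw [h1, h2, havg_def, one_div, inv_mul_eq_div]
      rw [← hval]
      exact le_ciSup (rayleigh_bddAbove _) (⟨x1, hx10⟩ : {x : EuclideanSpace ℝ (Fin n) // x ≠ 0})
    set C : ℝ := 2*M^2/γ with hC_def
    have hC : 0 < C := by positivity
    have hup : ∀ ε : ℝ, max 1 (2*M/γ) ≤ ε →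
        maxEig (Matrix.diagonal d + ε • mutT n) ≤ avg + C/ε := by
      intro ε hε
      have hε1 : (1:ℝ) ≤ ε := le_trans (le_max_left _ _) hε
      have hε0 : (0:ℝ) < ε := lt_of_lt_of_le one_pos hε1
      have hεγ : 2*M ≤ ε*γ := by
        have h := le_trans (le_max_right 1 (2*M/γ)) hε
        rw [div_le_iff₀ hγ] at h
        linarith
      have hCε : 0 ≤ C/ε := div_nonneg hC.le hε0.le
      rw [maxEig_spec hpos _ (Aeps_herm d ε)]
      apply ciSup_le
      rintro ⟨x, hx0⟩
      have hxn : (0:ℝ) < ‖x‖ := norm_pos_iff.mpr hx0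
      have hx2 : (0:ℝ) < ‖x‖^2 := by positivity
      simp only
      rw [div_le_iff₀ hx2, inner_toEuclideanLin]
      set v : Fin n → ℝ := WithLp.equiv 2 (Fin n → ℝ) x with hv_def
      set c : ℝ := (∑ i, v i)/(n:ℝ) with hc_def
      set w : Fin n → ℝ := fun i => v i - c with hw_def
      set W : ℝ := ∑ i, (w i)^2 with hW_def
      have hW0 : 0 ≤ W := Finset.sum_nonneg fun i _ => sq_nonneg _
      have hsumw : ∑ i, w i = 0 := by
        show (∑ i : Fin n, (v i - c)) = 0
        rw [Finset.sum_sub_distrib, Finset.sum_const, Finset.card_univ, Fintype.card_fin,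
          nsmul_eq_mul, hc_def]
        field_simp
        ring
      have hquad := hgap w hsumw
      have hww : w ⬝ᵥ w = W := by
        rw [hW_def]
        exact Finset.sum_congr rfl fun i _ => by rw [sq]
      rw [hww] at hquad
      have hveq : v = w + (fun _ => c) := funext fun i => by
        show v i = v i - c + c
        ring
      have hvTv : v ⬝ᵥ (mutT n *ᵥ v) = w ⬝ᵥ (mutT n *ᵥ w) := by
        conv_lhs => rw [hveq]
        rw [Matrix.mulVec_add, mutT_mulVec_const, add_zero, add_dotProduct]
        have hzero : (fun _ : Fin n => c) ⬝ᵥ (mutT n *ᵥ w) = 0 := by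
          rw [dotProduct_mulVec, ← mutT_transpose, vecMul_transpose, mutT_mulVec_const,
            zero_dotProduct]
        rw [hzero, add_zero]
      have hns : ‖x‖^2 = (n:ℝ)*c^2 + W := by
        rw [norm_sq_eq_dot, ← hv_def]
        have h1 : v ⬝ᵥ v = ∑ i, (c^2 + ((2*c)*(w i) + (w i)^2)) := by
          rw [dotProduct]
          refine Finset.sum_congr rfl fun i _ => ?_
          have hwi : w i = v i - c := rfl
          have hvi : v i = w i + c := by rw [hwi]; ring
          rw [hvi]; ring
        rw [h1, Finset.sum_add_distrib, Finset.sum_add_distrib, Finset.sum_const,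
          Finset.card_univ, Fintype.card_fin, nsmul_eq_mul, ← Finset.mul_sum, hsumw, mul_zero,
          zero_add, ← hW_def]
      set s : ℝ := 2*M/(ε*γ) with hs_def
      have hs : 0 < s := div_pos (by linarith) (mul_pos hε0 hγ)
      have hsM : s*M = C/ε := by
        rw [hs_def, hC_def]
        field_simp
      have hsinvM : s⁻¹*M = ε*γ/2 := by
        rw [hs_def, inv_div]
        field_simp
      have h3 : ∑ i, d i*(w i)^2 ≤ M*W := by
        rw [hW_def, Finset.mul_sum]
        exact Finset.sum_le_sum fun i _ => mul_le_mul_of_nonneg_right (hdM i) (sq_nonneg _)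
      have hdiag : ∑ i, d i * (v i)^2 ≤ M*c^2 + (C/ε)*c^2 + (ε*γ/2)*W + M*W := by
        have hterm : ∀ i, d i * (v i)^2 = d i*c^2 + d i*(2*c*(w i)) + d i*(w i)^2 := fun i => by
          have hwi : w i = v i - c := rfl
          have hvi : v i = w i + c := by rw [hwi]; ring
          rw [hvi]; ring
        rw [Finset.sum_congr rfl fun i _ => hterm i, Finset.sum_add_distrib,
          Finset.sum_add_distrib]
        have h1 : ∑ i, d i * c^2 = M*c^2 := by rw [← Finset.sum_mul]
        have h2 : ∑ i, d i * (2*c*(w i)) ≤ (s*M)*c^2 + (s⁻¹*M)*W := by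
          have hstep : ∑ i, d i * (2*c*(w i)) ≤ ∑ i, d i * (s*c^2 + s⁻¹*(w i)^2) :=
            Finset.sum_le_sum fun i _ =>
              mul_le_mul_of_nonneg_left (amgm s c (w i) hs) (hd i).le
          have heq : ∑ i, d i * (s*c^2 + s⁻¹*(w i)^2)
              = (∑ i, d i)*(s*c^2) + s⁻¹*(∑ i, d i*(w i)^2) := by
            simp only [mul_add]
            rw [Finset.sum_add_distrib, ← Finset.sum_mul, Finset.mul_sum]
            congr 1
            exact Finset.sum_congr rfl fun i _ => by ring
          have hlast : (∑ i, d i)*(s*c^2) + s⁻¹*(∑ i, d i*(w i)^2)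
              ≤ (s*M)*c^2 + (s⁻¹*M)*W := by
            have ha2 : (∑ i, d i)*(s*c^2) = (s*M)*c^2 := by rw [← hM_def]; ring
            have hb2 : s⁻¹*(∑ i, d i*(w i)^2) ≤ s⁻¹*(M*W) :=
              mul_le_mul_of_nonneg_left h3 (inv_nonneg.mpr hs.le)
            rw [ha2]
            have : s⁻¹*(M*W) = (s⁻¹*M)*W := by ring
            linarith [hb2, this.le]
          linarith [hstep, heq.le, hlast]
        rw [hsM, hsinvM] at h2
        linarith [h1.le, h2, h3]
      clear_value v c w W s C M avg d
      rw [dot_Aeps, dot_diag]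
      have hq2 : ε*(v ⬝ᵥ (mutT n *ᵥ v)) ≤ -(ε*γ)*W := by
        rw [hvTv]
        have := mul_le_mul_of_nonneg_left hquad hε0.le
        calc ε*(w ⬝ᵥ (mutT n *ᵥ w)) ≤ ε*(-γ*W) := this
          _ = -(ε*γ)*W := by ring
      have havgM : avg*(n:ℝ) = M := by rw [havg_def]; field_simp
      have hgoal_rhs : (avg + C/ε)*‖x‖^2
          = M*c^2 + (C/ε)*((n:ℝ)*c^2) + avg*W + (C/ε)*W := by
        rw [hns]
        linear_combination (c^2) * havgM
      rw [hgoal_rhs]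
      have e1 : (C/ε)*c^2 ≤ (C/ε)*((n:ℝ)*c^2) := e1_aux _ _ _ hCε (sq_nonneg c) h1n
      have e2 : (ε*γ/2)*W + M*W ≤ ε*γ*W := by
        have := e2_aux (ε*γ) M W hW0 hεγ
        linarith only [this]
      have e3 : (0:ℝ) ≤ avg*W := mul_nonneg havg.le hW0
      have e4 : (0:ℝ) ≤ (C/ε)*W := mul_nonneg hCε hW0
      linarith only [hdiag, e1, e2, e3, e4, hq2]
    have hlim : Filter.Tendsto (fun ε : ℝ => avg + C/ε) Filter.atTop (nhds avg) := by
      have h := Filter.Tendsto.add (tendsto_const_nhds (x := avg) (f := Filter.atTop))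
        ((tendsto_const_nhds (x := C)).div_atTop Filter.tendsto_id)
      simpa using h
    apply tendsto_of_tendsto_of_tendsto_of_le_of_le' tendsto_const_nhds hlim
    · exact Filter.Eventually.of_forall hlow
    · exact Filter.eventually_atTop.mpr ⟨max 1 (2*M/γ), hup⟩
end
end

section
/- Suppose 0 < u < m := max_{1≤j≤n} μ_j(1) and there is a unique index i₀ with λ_{i₀}(u) = min_{1≤i≤n} λ_i(u) < +∞. Then there exist ε₀ > 0 and continuously differentiable maps ε ↦ x^ε ∈ ℝ^n and ε ↦ s^ε ∈ ℝ on [0, ε₀) such that for every ε ∈ (0, ε₀), (x^ε, s^ε) is the coexistence steady state of (S), and as ε ↓ 0: s^ε = λ_{i₀}(u) + ε σ + o(ε) and x^ε = x* + ε ξ + o(ε), where x* := (1 − λ_{i₀}(u)) e_{i₀} (with e_{i₀} the i₀-th canonical basis vector), σ := −T_{i₀,i₀} / μ'_{i₀}(λ_{i₀}(u)), ξ_j = 0 for j ∈ {1,…,n} \ {i₀−1, i₀, i₀+1}, ξ_j = (1 − λ_{i₀}(u)) / (u − μ_j(λ_{i₀}(u))) for j ∈ {i₀−1, i₀+1} ∩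 {1,…,n}, and ξ_{i₀} = −ξ_{i₀−1} − ξ_{i₀+1} − σ (with the convention ξ_0 = ξ_{n+1} = 0). -/
open Matrix Filter Set Topology Asymptotics

noncomputable section

/- ===== auxiliary lemmas ===== -/

lemma monod_hasDerivAt (m a s : ℝ) (h : a + s ≠ 0) :
    HasDerivAt (fun t => monod m a t) (m * a / (a + s) ^ 2) s := by
  have h1 : HasDerivAt (fun t : ℝ => m * t) m s := by
    simpa using (hasDerivAt_id s).const_mul m
  have h2 : HasDerivAt (fun t : ℝ => a + t) 1 s := by
    simpa using (hasDerivAt_id s).const_add a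
  have : HasDerivAt (fun t => monod m a t) ((m * (a + s) - m * s * 1) / (a + s) ^ 2) s :=
    h1.div h2 h
  convert this using 1
  ring

lemma monod_contDiffAt (m a s : ℝ) (h : a + s ≠ 0) :
    ContDiffAt ℝ 1 (fun t => monod m a t) s := by
  unfold monod
  exact (contDiffAt_const.mul contDiffAt_id).div (contDiffAt_const.add contDiffAt_id) h

def nbrs (n : ℕ) (k : Fin n) : Finset (Fin n) :=
  Finset.univ.filter (fun j => (j:ℕ)+1 = (k:ℕ) ∨ (k:ℕ)+1 = (j:ℕ))

def deg (n : ℕ) (k : Fin n) : ℝ :=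
  (if 0 < (k:ℕ) then 1 else 0) + (if (k:ℕ)+1 < n then 1 else 0)

variable {n : ℕ}

lemma deg_nonneg (k : Fin n) : 0 ≤ deg n k := by unfold deg; positivity

lemma mutT_diag_s14 (k : Fin n) : mutT n k k = -(deg n k) := by simp [mutT, deg]

lemma mutT_adj {k j : Fin n} (h : (j:ℕ)+1 = (k:ℕ) ∨ (k:ℕ)+1 = (j:ℕ)) : mutT n k j = 1 := by
  simp only [mutT, Matrix.of_apply]; rw [if_pos h.symm]

lemma mutT_other {k j : Fin n} (h1 : ¬((j:ℕ)+1 = (k:ℕ) ∨ (k:ℕ)+1 = (j:ℕ))) (h2 : k ≠ j) :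
    mutT n k j = 0 := by
  simp only [mutT, Matrix.of_apply]; rw [if_neg (by tauto), if_neg h2]

lemma nbrs_card (k : Fin n) : ((nbrs n k).card : ℝ) = deg n k := by
  have h1 : (Finset.univ.filter (fun j : Fin n => (j:ℕ)+1 = (k:ℕ))).card
      = if 0 < (k:ℕ) then 1 else 0 := by
    split
    case isTrue h =>
      rw [Finset.card_eq_one]
      refine ⟨⟨(k:ℕ)-1, by omega⟩, ?_⟩
      ext j; simp [Fin.ext_iff]; omega
    case isFalse h =>
      rw [Finset.card_eq_zero]
      ext j; simp; omega
  have h2 : (Finset.univ.filter (fun j : Fin n => (k:ℕ)+1 = (j:ℕ))).card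
      = if (k:ℕ)+1 < n then 1 else 0 := by
    split
    case isTrue h =>
      rw [Finset.card_eq_one]
      refine ⟨⟨(k:ℕ)+1, h⟩, ?_⟩
      ext j; simp [Fin.ext_iff]; omega
    case isFalse h =>
      rw [Finset.card_eq_zero]
      ext j; simp; omega
  have hdisj : Disjoint (Finset.univ.filter (fun j : Fin n => (j:ℕ)+1 = (k:ℕ)))
      (Finset.univ.filter (fun j : Fin n => (k:ℕ)+1 = (j:ℕ))) := by
    rw [Finset.disjoint_filter]
    intro j _ hj1 hj2; omega
  rw [nbrs, Finset.filter_or, Finset.card_union_of_disjoint hdisj, h1, h2, deg]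
  split <;> split <;> norm_num

lemma mutT_mulVec_s14 (x : Fin n → ℝ) (k : Fin n) :
    (mutT n).mulVec x k = (∑ j ∈ nbrs n k, x j) - deg n k * x k := by
  have : (mutT n).mulVec x k = ∑ j, mutT n k j * x j := by
    simp [Matrix.mulVec, dotProduct]
  rw [this, ← Finset.sum_filter_add_sum_filter_not Finset.univ
    (fun j : Fin n => (j:ℕ)+1 = (k:ℕ) ∨ (k:ℕ)+1 = (j:ℕ))]
  have e1 : ∑ j ∈ Finset.univ.filter (fun j : Fin n => (j:ℕ)+1 = (k:ℕ) ∨ (k:ℕ)+1 = (j:ℕ)),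
      mutT n k j * x j = ∑ j ∈ nbrs n k, x j := by
    refine Finset.sum_congr rfl fun j hj => ?_
    rw [mutT_adj (Finset.mem_filter.1 hj).2, one_mul]
  have e2 : ∑ j ∈ Finset.univ.filter
      (fun j : Fin n => ¬((j:ℕ)+1 = (k:ℕ) ∨ (k:ℕ)+1 = (j:ℕ))), mutT n k j * x j
      = -(deg n k) * x k := by
    rw [Finset.sum_eq_single_of_mem k]
    · rw [mutT_diag_s14]
    · simp
    · intro j hj hjk
      rw [mutT_other (Finset.mem_filter.1 hj).2 (Ne.symm hjk), zero_mul]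
  rw [e1, e2]; ring

lemma pos_of_steady (m a : Fin n → ℝ) (u s ε : ℝ) (hε : 0 < ε) (i₀ : Fin n)
    (hne : ∀ j, j ≠ i₀ → monod (m j) (a j) s < u)
    (x : Fin n → ℝ)
    (heq : ∀ i, (monod (m i) (a i) s - u) * x i + ε * (mutT n).mulVec x i = 0)
    (hx0 : 0 < x i₀) : ∀ j, 0 < x j := by
  obtain ⟨k, -, hk⟩ := Finset.exists_min_image Finset.univ x ⟨i₀, Finset.mem_univ i₀⟩
  have hk' : ∀ j, x k ≤ x j := fun j => hk j (Finset.mem_univ j)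
  have hxk : 0 ≤ x k := by
    by_contra h
    push_neg at h
    have hki : k ≠ i₀ := fun e => by rw [e] at h; linarith
    have hq := heq k
    rw [mutT_mulVec_s14] at hq
    have hsum : deg n k * x k ≤ ∑ j ∈ nbrs n k, x j := by
      calc deg n k * x k = ∑ _j ∈ nbrs n k, x k := by
            rw [Finset.sum_const, nsmul_eq_mul, ← nbrs_card]
          _ ≤ ∑ j ∈ nbrs n k, x j := Finset.sum_le_sum fun j _ => hk' j
    have hμ := hne k hki
    nlinarith [mul_nonneg hε.le (sub_nonneg.2 hsum)]
  have hnonneg : ∀ j, 0 ≤ x j := fun j => le_trans hxk (hk' j)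
  have step : ∀ j : Fin n, j ≠ i₀ → ∀ j' ∈ nbrs n j, 0 < x j' → 0 < x j := by
    intro j hji j' hmem hpos
    have hq := heq j
    rw [mutT_mulVec_s14] at hq
    have hS : x j' ≤ ∑ jj ∈ nbrs n j, x jj :=
      Finset.single_le_sum (fun i _ => hnonneg i) hmem
    have hμ := hne j hji
    have hdn := deg_nonneg (n := n) j
    have h1 : x j * (u - monod (m j) (a j) s + ε * deg n j) = ε * ∑ jj ∈ nbrs n j, x jj := by
      linear_combination -hq
    have h2 : 0 < ε * ∑ jj ∈ nbrs n j, x jj :=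
      lt_of_lt_of_le (mul_pos hε hpos) (mul_le_mul_of_nonneg_left hS hε.le)
    by_contra hle
    push_neg at hle
    nlinarith [mul_nonneg hε.le hdn]
  have key : ∀ d : ℕ, ∀ j : Fin n, ((j:ℕ) = (i₀:ℕ) + d ∨ (j:ℕ) + d = (i₀:ℕ)) → 0 < x j := by
    intro d
    induction d with
    | zero =>
      intro j hj
      have : j = i₀ := Fin.ext (by omega)
      rwa [this]
    | succ d ih =>
      intro j hj
      have hji : j ≠ i₀ := by
        intro e
        rw [e] at hj
        omega
      rcases hj with hj | hj
      · have hlt : 0 < (j:ℕ) := by omega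
        refine step j hji ⟨(j:ℕ)-1, by omega⟩ ?_ (ih _ (Or.inl (by simp; omega)))
        simp [nbrs]
        omega
      · have hlt : (j:ℕ)+1 < n := by omega
        refine step j hji ⟨(j:ℕ)+1, hlt⟩ ?_ (ih _ (Or.inr (by simp; omega)))
        simp [nbrs]
  intro j
  rcases le_or_gt (i₀:ℕ) (j:ℕ) with h | h
  · exact key ((j:ℕ)-(i₀:ℕ)) j (Or.inl (by omega))
  · exact key ((i₀:ℕ)-(j:ℕ)) j (Or.inr (by omega))

abbrev PT (n : ℕ) := ℝ × (Fin n → ℝ) × ℝ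

def Fmap (n : ℕ) (m a : Fin n → ℝ) (u : ℝ) : PT n → PT n :=
  fun p => (p.1,
    fun i => (monod (m i) (a i) p.2.2 - u) * p.2.1 i + p.1 * (mutT n).mulVec p.2.1 i,
    (∑ j, p.2.1 j) + p.2.2 - 1)

def sndQ (n : ℕ) : PT n →L[ℝ] (Fin n → ℝ) × ℝ := ContinuousLinearMap.snd ℝ ℝ ((Fin n → ℝ) × ℝ)
def ssnd (n : ℕ) : PT n →L[ℝ] ℝ := (ContinuousLinearMap.snd ℝ (Fin n → ℝ) ℝ).comp (sndQ n)
def fstP (n : ℕ) : PT n →L[ℝ] ℝ := ContinuousLinearMap.fst ℝ ℝ ((Fin n → ℝ) × ℝ)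
def xvec (n : ℕ) : PT n →L[ℝ] (Fin n → ℝ) :=
  (ContinuousLinearMap.fst ℝ (Fin n → ℝ) ℝ).comp (sndQ n)
def xproj (n : ℕ) (i : Fin n) : PT n →L[ℝ] ℝ := (ContinuousLinearMap.proj i).comp (xvec n)
def mulV (n : ℕ) (i : Fin n) : PT n →L[ℝ] ℝ :=
  (ContinuousLinearMap.proj i).comp
    (((mutT n).mulVecLin.toContinuousLinearMap).comp (xvec n))

def Dcomp (n : ℕ) (m a : Fin n → ℝ) (u s₀ : ℝ) (x₀ : Fin n → ℝ) (i : Fin n) : PT n →L[ℝ] ℝ :=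
  ((monod (m i) (a i) s₀ - u) • xproj n i + x₀ i • ((m i * a i / (a i + s₀) ^ 2) • ssnd n)) +
  ((0:ℝ) • mulV n i + ((mutT n).mulVec x₀ i) • fstP n)

def D3 (n : ℕ) : PT n →L[ℝ] ℝ := (∑ j, xproj n j) + ssnd n

def Lfull (n : ℕ) (m a : Fin n → ℝ) (u s₀ : ℝ) (x₀ : Fin n → ℝ) : PT n →L[ℝ] PT n :=
  (fstP n).prod ((ContinuousLinearMap.pi (Dcomp n m a u s₀ x₀)).prod (D3 n))

lemma Lfull_apply (n : ℕ) (m a : Fin n → ℝ) (u s₀ : ℝ) (x₀ : Fin n → ℝ) (v : PT n) :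
    Lfull n m a u s₀ x₀ v = (v.1,
      fun i => (monod (m i) (a i) s₀ - u) * v.2.1 i
        + (m i * a i / (a i + s₀) ^ 2 * x₀ i) * v.2.2 + (mutT n).mulVec x₀ i * v.1,
      (∑ j, v.2.1 j) + v.2.2) := by
  refine Prod.ext rfl (Prod.ext (funext fun i => ?_) ?_) <;>
    simp [Lfull, Dcomp, D3, xproj, mulV, ssnd, fstP, xvec, sndQ] <;> ring

lemma hasFDerivAt_Fmap (n : ℕ) (m a : Fin n → ℝ) (u : ℝ) (x₀ : Fin n → ℝ) (s₀ : ℝ)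
    (hden : ∀ i, a i + s₀ ≠ 0) :
    HasFDerivAt (Fmap n m a u) (Lfull n m a u s₀ x₀) ((0, x₀, s₀) : PT n) := by
  have hss : HasFDerivAt (fun p : PT n => p.2.2) (ssnd n) (0, x₀, s₀) := (ssnd n).hasFDerivAt
  have hcomp : ∀ i, HasFDerivAt
      (fun p : PT n => (monod (m i) (a i) p.2.2 - u) * p.2.1 i
        + p.1 * (mutT n).mulVec p.2.1 i) (Dcomp n m a u s₀ x₀ i) ((0, x₀, s₀) : PT n) := by
    intro i
    have h1 : HasFDerivAt (fun p : PT n => monod (m i) (a i) p.2.2 - u)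
        ((m i * a i / (a i + s₀) ^ 2) • ssnd n) ((0, x₀, s₀) : PT n) :=
      by have := ((monod_hasDerivAt (m i) (a i) s₀ (hden i)).comp_hasFDerivAt ((0, x₀, s₀) : PT n) hss).sub_const u
         exact this
    have h2 : HasFDerivAt (fun p : PT n => p.2.1 i) (xproj n i) ((0, x₀, s₀) : PT n) :=
      (xproj n i).hasFDerivAt
    have h3 : HasFDerivAt (fun p : PT n => p.1) (fstP n) ((0, x₀, s₀) : PT n) :=
      (fstP n).hasFDerivAt
    have h4 : HasFDerivAt (fun p : PT n => (mutT n).mulVec p.2.1 i) (mulV n i)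
        ((0, x₀, s₀) : PT n) := (mulV n i).hasFDerivAt
    exact (h1.mul h2).add (h3.mul h4)
  have hD3eq : ⇑(D3 n) = fun p : PT n => (∑ j, p.2.1 j) + p.2.2 := by
    funext p
    simp [D3, xproj, xvec, sndQ, ssnd]
  have h5 : HasFDerivAt (fun p : PT n => (∑ j, p.2.1 j) + p.2.2 - 1) (D3 n)
      ((0, x₀, s₀) : PT n) := by
    have := (D3 n).hasFDerivAt (x := ((0, x₀, s₀) : PT n))
    rw [hD3eq] at this
    exact this.sub_const 1
  have hpi : HasFDerivAt (fun p : PT n => fun i =>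
      (monod (m i) (a i) p.2.2 - u) * p.2.1 i + p.1 * (mutT n).mulVec p.2.1 i)
      (ContinuousLinearMap.pi (Dcomp n m a u s₀ x₀)) ((0, x₀, s₀) : PT n) := by
    refine hasFDerivAt_pi'.2 fun i => ?_
    rw [ContinuousLinearMap.proj_pi]
    exact hcomp i
  exact ((fstP n).hasFDerivAt).prodMk (hpi.prodMk h5)

lemma contDiffAt_Fmap (n : ℕ) (m a : Fin n → ℝ) (u : ℝ) (p₀ : PT n)
    (hden : ∀ i, a i + p₀.2.2 ≠ 0) :
    ContDiffAt ℝ 1 (Fmap n m a u) p₀ := by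
  have hss : ContDiffAt ℝ 1 (fun p : PT n => p.2.2) p₀ :=
    (contDiff_snd.comp contDiff_snd).contDiffAt
  have hx : ∀ i, ContDiffAt ℝ 1 (fun p : PT n => p.2.1 i) p₀ := by
    intro i
    have h1 : ContDiff ℝ 1 (fun p : PT n => p.2.1) := contDiff_fst.comp contDiff_snd
    have := ((ContinuousLinearMap.proj (R := ℝ) (φ := fun _ : Fin n => ℝ) i).contDiff.comp
      h1).contDiffAt (x := p₀)
    simpa [Function.comp_def] using this
  have hfst : ContDiffAt ℝ 1 (fun p : PT n => p.1) p₀ := contDiff_fst.contDiffAt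
  have hmon : ∀ i, ContDiffAt ℝ 1 (fun p : PT n => monod (m i) (a i) p.2.2) p₀ := by
    intro i
    unfold monod
    exact (contDiffAt_const.mul hss).div (contDiffAt_const.add hss) (hden i)
  have hmv : ∀ i, ContDiffAt ℝ 1 (fun p : PT n => (mutT n).mulVec p.2.1 i) p₀ := by
    intro i
    have : (fun p : PT n => (mutT n).mulVec p.2.1 i) = fun p => ∑ j, mutT n i j * p.2.1 j := by
      funext p
      simp [Matrix.mulVec, dotProduct]
    rw [this]
    exact ContDiffAt.sum fun j _ => contDiffAt_const.mul (hx j)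
  refine hfst.prodMk (ContDiffAt.prodMk ?_ ?_)
  · exact contDiffAt_pi.2 fun i =>
      (((hmon i).sub contDiffAt_const).mul (hx i)).add (hfst.mul (hmv i))
  · exact ((ContDiffAt.sum fun j _ => hx j).add hss).sub contDiffAt_const

lemma Bmat_mulVec (n : ℕ) (m a : Fin n → ℝ) (s u ε : ℝ) (x : Fin n → ℝ) (i : Fin n) :
    (Bmat n m a s u ε).mulVec x i
      = (monod (m i) (a i) s - u) * x i + ε * (mutT n).mulVec x i := by
  simp [Bmat, Matrix.add_mulVec, Matrix.sub_mulVec, Matrix.smul_mulVec,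
    Matrix.mulVec_diagonal, Matrix.one_mulVec, Pi.smul_apply, smul_eq_mul,
    Pi.sub_apply, Pi.add_apply]
  ring

/-- first-order expansion of the coexistence steady state as `ε ↓ 0`.
Here `λ_{i₀}(u) = a_{i₀} u / (m_{i₀} - u)` is the break-even concentration of the winning
species `i₀`, `μ'_{i₀}(s) = m_{i₀} a_{i₀} / (a_{i₀} + s)²`, and `x* = (1 - λ_{i₀}(u)) e_{i₀}`. -/
theorem stmt_14 (n : ℕ) (hn : 1 ≤ n) (m a : Fin n → ℝ)
    (hm : ∀ i, 0 < m i) (ha : ∀ i, 0 < a i)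
    (hdist : ∀ i j, i ≠ j → (m i, a i) ≠ (m j, a j))
    (u : ℝ) (hu : 0 < u) (hum : u < ⨆ j : Fin n, monod (m j) (a j) 1)
    (i₀ : Fin n) (hi₀ : u < monod (m i₀) (a i₀) 1)
    (hmin : ∀ j, j ≠ i₀ → u < monod (m j) (a j) 1 →
      a i₀ * u / (m i₀ - u) < a j * u / (m j - u)) :
    ∃ ε₀ : ℝ, 0 < ε₀ ∧ ∃ X : ℝ → Fin n → ℝ, ∃ S : ℝ → ℝ,
      ContDiffOn ℝ 1 X (Set.Ico 0 ε₀) ∧ ContDiffOn ℝ 1 S (Set.Ico 0 ε₀) ∧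
      (∀ ε ∈ Set.Ioo (0 : ℝ) ε₀,
        (∀ i, 0 < X ε i) ∧ S ε ∈ Set.Ioo (0 : ℝ) 1 ∧
        (Bmat n m a (S ε) u ε).mulVec (X ε) = 0 ∧ (∑ j, X ε j) + S ε = 1) ∧
      ∃ σ : ℝ, ∃ ξ : Fin n → ℝ,
        σ = -(mutT n i₀ i₀)
              / (m i₀ * a i₀ / (a i₀ + a i₀ * u / (m i₀ - u)) ^ 2) ∧
        (∀ j : Fin n, ((j : ℕ) + 1 = (i₀ : ℕ) ∨ (i₀ : ℕ) + 1 = (j : ℕ)) →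
          ξ j = (1 - a i₀ * u / (m i₀ - u))
                  / (u - monod (m j) (a j) (a i₀ * u / (m i₀ - u)))) ∧
        (∀ j : Fin n, j ≠ i₀ → ¬((j : ℕ) + 1 = (i₀ : ℕ) ∨ (i₀ : ℕ) + 1 = (j : ℕ)) →
          ξ j = 0) ∧
        ξ i₀ = -σ - ∑ j ∈ Finset.univ.filter
            (fun j : Fin n => (j : ℕ) + 1 = (i₀ : ℕ) ∨ (i₀ : ℕ) + 1 = (j : ℕ)), ξ j ∧
        (fun ε => S ε - (a i₀ * u / (m i₀ - u) + ε * σ)) =o[𝓝[>] (0 : ℝ)] (fun ε => ε) ∧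
        (∀ j : Fin n,
          (fun ε => X ε j - ((if j = i₀ then 1 - a i₀ * u / (m i₀ - u) else 0) + ε * ξ j))
            =o[𝓝[>] (0 : ℝ)] (fun ε => ε)) := by
  classical
  set lam : ℝ := a i₀ * u / (m i₀ - u) with hlam
  have hai := ha i₀
  have hmi := hm i₀
  have hi₀' : u * (a i₀ + 1) < m i₀ := by
    have h := hi₀
    rw [monod, mul_one] at h
    exact (lt_div_iff₀ (by linarith)).1 h
  have hmusub : 0 < m i₀ - u := by nlinarith
  have hlam0 : 0 < lam := div_pos (mul_pos hai hu) hmusub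
  have hlam1 : lam < 1 := by
    rw [hlam, div_lt_one hmusub]; nlinarith
  have hden : ∀ j, a j + lam ≠ 0 := fun j => by have := ha j; positivity
  have heqv : monod (m i₀) (a i₀) lam = u := by
    rw [monod, div_eq_iff (hden i₀), hlam]
    field_simp
    ring
  have hltj : ∀ j, j ≠ i₀ → monod (m j) (a j) lam < u := by
    intro j hj
    have haj := ha j
    have hmj := hm j
    have hdj : 0 < a j + lam := by linarith
    rcases lt_or_ge u (monod (m j) (a j) 1) with hc | hc
    · have hj' : u * (a j + 1) < m j := by
        have h := hc
        rw [monod, mul_one] at h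
        exact (lt_div_iff₀ (by linarith)).1 h
      have hmju : 0 < m j - u := by nlinarith
      have h1 := hmin j hj hc
      have h2 : lam * (m j - u) < a j * u := (lt_div_iff₀ hmju).1 h1
      rw [monod, div_lt_iff₀ hdj]
      nlinarith
    · have h1 : monod (m j) (a j) lam < monod (m j) (a j) 1 := by
        rw [monod, monod, div_lt_div_iff₀ hdj (by linarith)]
        nlinarith [mul_lt_mul_of_pos_left hlam1 (mul_pos hmj haj)]
      linarith
  have hmup : 0 < m i₀ * a i₀ / (a i₀ + lam) ^ 2 :=
    div_pos (mul_pos hmi hai) (pow_pos (by linarith) 2)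
  set xstar : Fin n → ℝ := Pi.single i₀ (1 - lam) with hxstar
  have hxstar_i₀ : xstar i₀ = 1 - lam := by rw [hxstar]; simp
  have hxstar_ne : ∀ j, j ≠ i₀ → xstar j = 0 := fun j hj => by
    rw [hxstar]; exact Pi.single_eq_of_ne hj _
  have hmvstar : ∀ i, (mutT n).mulVec xstar i = mutT n i i₀ * (1 - lam) := by
    intro i
    rw [hxstar, Matrix.mulVec_single]
    rfl
  -- injectivity of the derivative
  have hinj : Function.Injective (Lfull n m a u lam xstar) := by
    rw [injective_iff_map_eq_zero]
    intro v hv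
    rw [Lfull_apply] at hv
    have h1 : v.1 = 0 := congrArg Prod.fst hv
    have h2 := congrArg (fun q : PT n => q.2.1) hv
    have h3 : (∑ j, v.2.1 j) + v.2.2 = 0 := congrArg (fun q : PT n => q.2.2) hv
    simp only at h2 h3
    have ht : v.2.2 = 0 := by
      have hc := congrFun h2 i₀
      simp only [hxstar_i₀, heqv, Pi.zero_apply, h1, sub_self, zero_mul, mul_zero,
        add_zero, zero_add] at hc
      have hne : m i₀ * a i₀ / (a i₀ + lam) ^ 2 * (1 - lam) ≠ 0 :=
        ne_of_gt (mul_pos hmup (by linarith))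
      exact (mul_eq_zero.1 hc).resolve_left hne
    have hxi : ∀ i, i ≠ i₀ → v.2.1 i = 0 := by
      intro i hi
      have hc := congrFun h2 i
      simp only [hxstar_ne i hi, Pi.zero_apply, h1, ht, mul_zero, zero_mul, add_zero] at hc
      have hne : monod (m i) (a i) lam - u ≠ 0 := by
        have := hltj i hi; linarith
      exact (mul_eq_zero.1 hc).resolve_left hne
    have hxi₀ : v.2.1 i₀ = 0 := by
      have hsum : ∑ j, v.2.1 j = v.2.1 i₀ :=
        Finset.sum_eq_single i₀ (fun b _ hb => hxi b hb) (by simp)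
      rw [hsum, ht, add_zero] at h3
      exact h3
    have hfun : v.2.1 = 0 := funext fun i => by
      rcases eq_or_ne i i₀ with rfl | hi
      · exact hxi₀
      · exact hxi i hi
    exact Prod.ext h1 (Prod.ext hfun ht)
  have hsurj : Function.Surjective (Lfull n m a u lam xstar) :=
    (LinearMap.injective_iff_surjective
      (f := ((Lfull n m a u lam xstar : PT n →L[ℝ] PT n) : PT n →ₗ[ℝ] PT n))).1 hinj
  set Leq : PT n ≃L[ℝ] PT n :=
    (LinearEquiv.ofBijective
      ((Lfull n m a u lam xstar : PT n →L[ℝ] PT n) : PT n →ₗ[ℝ] PT n)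
      ⟨hinj, hsurj⟩).toContinuousLinearEquiv with hLeq
  have hLeqcoe : (Leq : PT n →L[ℝ] PT n) = Lfull n m a u lam xstar := by
    apply ContinuousLinearMap.coe_injective
    rfl
  have hLeqapp : ∀ v, Leq v = Lfull n m a u lam xstar v := fun v => rfl
  -- inverse function theorem
  have hFc : ContDiffAt ℝ 1 (Fmap n m a u) ((0:ℝ), xstar, lam) :=
    contDiffAt_Fmap n m a u _ hden
  have hFd : HasFDerivAt (Fmap n m a u) (Leq : PT n →L[ℝ] PT n) ((0:ℝ), xstar, lam) := by
    rw [hLeqcoe]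
    exact hasFDerivAt_Fmap n m a u xstar lam hden
  have hstrict := hFc.hasStrictFDerivAt' hFd one_ne_zero
  have hFp₀ : Fmap n m a u ((0:ℝ), xstar, lam) = ((0:ℝ), (0 : Fin n → ℝ), (0:ℝ)) := by
    unfold Fmap
    refine Prod.ext rfl (Prod.ext (funext fun i => ?_) ?_)
    · show (monod (m i) (a i) lam - u) * xstar i
        + (0:ℝ) * (mutT n).mulVec xstar i = (0 : Fin n → ℝ) i
      rcases eq_or_ne i i₀ with rfl | hi
      · rw [heqv]; simp
      · rw [hxstar_ne i hi]; simp
    · show (∑ j, xstar j) + lam - 1 = 0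
      rw [hxstar, Finset.sum_pi_single']
      simp
  set g : PT n → PT n := hstrict.localInverse _ _ _ with hgdef
  have hginv : ∀ᶠ y in 𝓝 (((0:ℝ), (0 : Fin n → ℝ), (0:ℝ)) : PT n),
      Fmap n m a u (g y) = y := by
    have := hstrict.eventually_right_inverse
    rwa [hFp₀] at this
  have hg0 : g (((0:ℝ), (0 : Fin n → ℝ), (0:ℝ)) : PT n) = ((0:ℝ), xstar, lam) := by
    have := hstrict.localInverse_apply_image
    rwa [hFp₀] at this
  have hgstrict : HasStrictFDerivAt g (Leq.symm : PT n →L[ℝ] PT n)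
      (((0:ℝ), (0 : Fin n → ℝ), (0:ℝ)) : PT n) := by
    have := hstrict.to_localInverse
    rwa [hFp₀] at this
  have hgC : ContDiffAt ℝ 1 g (((0:ℝ), (0 : Fin n → ℝ), (0:ℝ)) : PT n) := by
    have := hFc.to_localInverse hFd one_ne_zero
    rw [hFp₀] at this
    exact this
  -- the curve
  set ι : ℝ → PT n := fun ε => (ε, 0, 0) with hι
  set φ : ℝ → PT n := fun ε => g (ι ε) with hφ
  have hφ0 : φ 0 = ((0:ℝ), xstar, lam) := hg0
  have hιd : HasDerivAt ι (((1:ℝ), (0 : Fin n → ℝ), (0:ℝ)) : PT n) 0 := by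
    have h1 : HasDerivAt (fun ε : ℝ => ε) (1:ℝ) 0 := hasDerivAt_id 0
    have h2 : HasDerivAt (fun _ : ℝ => ((0, 0) : (Fin n → ℝ) × ℝ))
      (0 : (Fin n → ℝ) × ℝ) 0 := hasDerivAt_const 0 _
    exact h1.prodMk h2
  have hφd : HasDerivAt φ (Leq.symm (((1:ℝ), (0 : Fin n → ℝ), (0:ℝ)) : PT n)) 0 :=
    by have := hgstrict.hasFDerivAt.comp_hasDerivAt 0 hιd
       exact this
  -- identification of the derivative
  set σv : ℝ := -(mutT n i₀ i₀) / (m i₀ * a i₀ / (a i₀ + lam) ^ 2) with hσv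
  set ξaux : Fin n → ℝ := fun j => (1 - lam) / (u - monod (m j) (a j) lam) with hξaux
  set ξv : Fin n → ℝ := fun j =>
    if j = i₀ then -σv - ∑ jj ∈ nbrs n i₀, ξaux jj
    else if ((j:ℕ)+1 = (i₀:ℕ) ∨ (i₀:ℕ)+1 = (j:ℕ)) then ξaux j else 0 with hξv
  have hξadj : ∀ j : Fin n, ((j:ℕ)+1 = (i₀:ℕ) ∨ (i₀:ℕ)+1 = (j:ℕ)) → ξv j = ξaux j := by
    intro j hj
    have hne : j ≠ i₀ := by
      rintro rfl
      omega
    simp only [hξv, if_neg hne, if_pos hj]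
  have hξi₀ : ξv i₀ = -σv - ∑ jj ∈ nbrs n i₀, ξaux jj := by
    simp only [hξv, if_pos rfl]
  have hξother : ∀ j : Fin n, j ≠ i₀ → ¬((j:ℕ)+1 = (i₀:ℕ) ∨ (i₀:ℕ)+1 = (j:ℕ)) → ξv j = 0 := by
    intro j h1 h2
    simp only [hξv, if_neg h1, if_neg h2]
  have hweq : (Leq.symm (((1:ℝ), (0 : Fin n → ℝ), (0:ℝ)) : PT n) : PT n)
      = ((1:ℝ), ξv, σv) := by
    rw [ContinuousLinearEquiv.symm_apply_eq]
    have hLv : Leq (((1:ℝ), ξv, σv) : PT n) = Lfull n m a u lam xstar ((1:ℝ), ξv, σv) := rfl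
    rw [hLv, Lfull_apply]
    symm
    refine Prod.ext rfl (Prod.ext (funext fun i => ?_) ?_)
    · simp only [Pi.zero_apply, hmvstar i]
      rcases eq_or_ne i i₀ with rfl | hi
      · have h2 : (m i * a i / (a i + lam) ^ 2) ≠ 0 := ne_of_gt hmup
        rw [heqv, hxstar_i₀, hσv]
        field_simp
        ring
      · rw [hxstar_ne i hi]
        by_cases hadj : ((i:ℕ)+1 = (i₀:ℕ) ∨ (i₀:ℕ)+1 = (i:ℕ))
        · rw [hξadj i hadj, hξaux]
          simp only
          rw [mutT_adj (Or.symm hadj)]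
          have hne2 : u - monod (m i) (a i) lam ≠ 0 := by
            have := hltj i hi; intro h; nlinarith
          field_simp
          ring
        · rw [hξother i hi hadj, mutT_other (fun h => hadj (Or.symm h)) hi]
          ring
    · have hsplit : ∑ j, ξv j = ξv i₀ + ∑ j ∈ Finset.univ.erase i₀, ξv j :=
        (Finset.add_sum_erase _ ξv (Finset.mem_univ i₀)).symm
      have h1 : ∀ j ∈ Finset.univ.erase i₀, ξv j
          = if ((j:ℕ)+1 = (i₀:ℕ) ∨ (i₀:ℕ)+1 = (j:ℕ)) then ξaux j else 0 := by
        intro j hj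
        simp only [hξv, if_neg (Finset.mem_erase.1 hj).1]
      have herase : ∑ j ∈ Finset.univ.erase i₀, ξv j = ∑ j ∈ nbrs n i₀, ξaux j := by
        rw [Finset.sum_congr rfl h1, Finset.sum_ite, Finset.sum_const_zero, add_zero]
        congr 1
        ext j
        simp only [nbrs, Finset.mem_filter, Finset.mem_erase, Finset.mem_univ, true_and,
          and_true, Fin.ext_iff]
        omega
      rw [hsplit, herase, hξi₀]
      ring
  -- continuity facts
  have hφcont : ContinuousAt φ 0 := hφd.continuousAt
  have hScont : ContinuousAt (fun ε => (φ ε).2.2) 0 :=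
    ((continuous_snd.comp continuous_snd).continuousAt).comp hφcont
  have hS0 : (φ 0).2.2 = lam := by rw [hφ0]
  have hXcont : ContinuousAt (fun ε => (φ ε).2.1 i₀) 0 :=
    (((continuous_apply i₀).comp (continuous_fst.comp continuous_snd)).continuousAt).comp hφcont
  have hX0 : (φ 0).2.1 i₀ = 1 - lam := by rw [hφ0]; exact hxstar_i₀
  -- local smoothness neighborhood
  obtain ⟨U, hU, hUc⟩ := hgC.contDiffOn le_rfl (by simp)
  set V := interior U with hV
  have hVo : IsOpen V := isOpen_interior
  have hV0 : (((0:ℝ), (0 : Fin n → ℝ), (0:ℝ)) : PT n) ∈ V := mem_interior_iff_mem_nhds.2 hU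
  have hVc : ContDiffOn ℝ 1 g V := hUc.mono interior_subset
  have hιt : Tendsto ι (𝓝 0) (𝓝 (((0:ℝ), (0 : Fin n → ℝ), (0:ℝ)) : PT n)) :=
    (continuous_id.prodMk continuous_const).continuousAt
  -- collect eventual properties
  have ev1 : ∀ᶠ ε in 𝓝 (0:ℝ), Fmap n m a u (φ ε) = ι ε := hιt.eventually hginv
  have ev2 : ∀ᶠ ε in 𝓝 (0:ℝ), ι ε ∈ V := hιt (hVo.mem_nhds hV0)
  have ev3 : ∀ᶠ ε in 𝓝 (0:ℝ), (φ ε).2.2 ∈ Set.Ioo (0:ℝ) 1 := by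
    refine hScont.eventually_mem ?_
    rw [hS0]
    exact isOpen_Ioo.mem_nhds ⟨hlam0, hlam1⟩
  have ev4 : ∀ᶠ ε in 𝓝 (0:ℝ), 0 < (φ ε).2.1 i₀ := by
    have := hXcont.eventually_mem (s := Set.Ioi (0:ℝ)) (by
      rw [hX0]; exact isOpen_Ioi.mem_nhds (by simp only [Set.mem_Ioi]; linarith))
    exact this.mono fun ε h => h
  have ev5 : ∀ᶠ ε in 𝓝 (0:ℝ), ∀ j, j ≠ i₀ → monod (m j) (a j) ((φ ε).2.2) < u := by
    rw [eventually_all]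
    intro j
    rcases eq_or_ne j i₀ with rfl | hj
    · exact Eventually.of_forall fun ε h => absurd rfl h
    · have h1 : ContinuousAt (fun t => monod (m j) (a j) t) ((φ 0).2.2) := by
        rw [hS0]
        exact (monod_contDiffAt (m j) (a j) lam (hden j)).continuousAt
      have hc : ContinuousAt (fun ε => monod (m j) (a j) ((φ ε).2.2)) 0 :=
        ContinuousAt.comp (g := fun t => monod (m j) (a j) t)
          (f := fun ε => (φ ε).2.2) h1 hScont
      have hmem : Set.Iio u ∈ 𝓝 ((fun ε => monod (m j) (a j) ((φ ε).2.2)) 0) := by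
        simp only
        rw [hS0]
        exact isOpen_Iio.mem_nhds (hltj j hj)
      exact (hc.eventually_mem hmem).mono fun ε h _ => h
  obtain ⟨ε₀, hε₀, hball⟩ := Metric.eventually_nhds_iff.1
    (((ev1.and ev2).and ((ev3.and ev4).and ev5)))
  have hmem : ∀ ε ∈ Set.Ico (0:ℝ) ε₀,
      (Fmap n m a u (φ ε) = ι ε ∧ ι ε ∈ V) ∧
      ((φ ε).2.2 ∈ Set.Ioo (0:ℝ) 1 ∧ 0 < (φ ε).2.1 i₀) ∧
      (∀ j, j ≠ i₀ → monod (m j) (a j) ((φ ε).2.2) < u) := by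
    intro ε hε
    exact hball (by rw [Real.dist_eq, sub_zero, abs_of_nonneg hε.1]; exact hε.2)
  -- derivatives of components
  have hφd' : HasDerivAt φ (((1:ℝ), ξv, σv) : PT n) 0 := by
    rw [← hweq]; exact hφd
  have hSd : HasDerivAt (fun ε => (φ ε).2.2) σv 0 := by
    have := (ssnd n).hasFDerivAt.comp_hasDerivAt 0 hφd'
    simpa [ssnd, sndQ, Function.comp_def] using this
  have hXd : ∀ j, HasDerivAt (fun ε => (φ ε).2.1 j) (ξv j) 0 := by
    intro j
    have := (xproj n j).hasFDerivAt.comp_hasDerivAt 0 hφd'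
    simpa [xproj, xvec, sndQ, Function.comp_def] using this
  have hSo : (fun ε => (φ ε).2.2 - (lam + ε * σv)) =o[𝓝[>] (0:ℝ)] fun ε => ε := by
    have h := hasDerivAt_iff_isLittleO.1 hSd
    simp only [sub_zero, smul_eq_mul, hS0] at h
    have h2 : (fun ε : ℝ => (φ ε).2.2 - (lam + ε * σv))
        = fun ε => (φ ε).2.2 - lam - ε * σv := by funext ε; ring
    rw [h2]
    exact h.mono nhdsWithin_le_nhds
  have hXo : ∀ j, (fun ε => (φ ε).2.1 j - ((if j = i₀ then 1 - lam else 0) + ε * ξv j))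
      =o[𝓝[>] (0:ℝ)] fun ε => ε := by
    intro j
    have h := hasDerivAt_iff_isLittleO.1 (hXd j)
    have hX0j : (φ 0).2.1 j = (if j = i₀ then 1 - lam else 0) := by
      rw [hφ0]
      show xstar j = _
      rw [hxstar]
      exact Pi.single_apply i₀ (1-lam) j
    simp only [sub_zero, smul_eq_mul, hX0j] at h
    have h2 : (fun ε : ℝ => (φ ε).2.1 j - ((if j = i₀ then 1 - lam else 0) + ε * ξv j))
        = fun ε => (φ ε).2.1 j - (if j = i₀ then 1 - lam else 0) - ε * ξv j := by
      funext ε; ring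
    rw [h2]
    exact h.mono nhdsWithin_le_nhds
  -- assemble
  refine ⟨ε₀, hε₀, fun ε => (φ ε).2.1, fun ε => (φ ε).2.2, ?_, ?_, ?_,
    σv, ξv, rfl, ?_, ?_, ?_, hSo, hXo⟩
  · -- ContDiffOn X
    intro ε hε
    have hιV : ι ε ∈ V := (hmem ε hε).1.2
    have hgat : ContDiffAt ℝ 1 g (ι ε) := hVc.contDiffAt (hVo.mem_nhds hιV)
    have hιat : ContDiffAt ℝ 1 ι ε := (contDiff_id.prodMk contDiff_const).contDiffAt
    have hφat : ContDiffAt ℝ 1 φ ε := hgat.comp ε hιat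
    have hg2 : ContDiff ℝ 1 (fun p : PT n => p.2.1) := contDiff_fst.comp contDiff_snd
    have : ContDiffAt ℝ 1 (fun ε => (φ ε).2.1) ε :=
      ContDiffAt.comp (g := fun p : PT n => p.2.1) ε hg2.contDiffAt hφat
    exact this.contDiffWithinAt
  · -- ContDiffOn S
    intro ε hε
    have hιV : ι ε ∈ V := (hmem ε hε).1.2
    have hgat : ContDiffAt ℝ 1 g (ι ε) := hVc.contDiffAt (hVo.mem_nhds hιV)
    have hιat : ContDiffAt ℝ 1 ι ε := (contDiff_id.prodMk contDiff_const).contDiffAt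
    have hφat : ContDiffAt ℝ 1 φ ε := hgat.comp ε hιat
    have hg2 : ContDiff ℝ 1 (fun p : PT n => p.2.2) := contDiff_snd.comp contDiff_snd
    have : ContDiffAt ℝ 1 (fun ε => (φ ε).2.2) ε :=
      ContDiffAt.comp (g := fun p : PT n => p.2.2) ε hg2.contDiffAt hφat
    exact this.contDiffWithinAt
  · -- steady state properties
    intro ε hεIoo
    have hb := hmem ε ⟨hεIoo.1.le, hεIoo.2⟩
    have hFφ : Fmap n m a u (φ ε) = ι ε := hb.1.1
    have h1 : (φ ε).1 = ε := congrArg Prod.fst hFφ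
    have h2 : ∀ i, (monod (m i) (a i) ((φ ε).2.2) - u) * (φ ε).2.1 i
        + (φ ε).1 * (mutT n).mulVec ((φ ε).2.1) i = 0 := by
      intro i
      have := congrArg (fun q : PT n => q.2.1 i) hFφ
      simpa [Fmap, hι] using this
    have heqε : ∀ i, (monod (m i) (a i) ((φ ε).2.2) - u) * (φ ε).2.1 i
        + ε * (mutT n).mulVec ((φ ε).2.1) i = 0 := fun i => by
      have h := h2 i
      rw [h1] at h
      exact h
    have hpos := pos_of_steady m a u ((φ ε).2.2) ε hεIoo.1 i₀ hb.2.2 ((φ ε).2.1) heqε hb.2.1.2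
    refine ⟨hpos, hb.2.1.1, ?_, ?_⟩
    · funext i
      rw [Bmat_mulVec]
      simpa using heqε i
    · have h3 := congrArg (fun q : PT n => q.2.2) hFφ
      simp only [Fmap, hι] at h3
      linarith [h3]
  · -- adjacent ξ
    intro j hj
    rw [hξadj j hj, hξaux]
  · -- other ξ
    intro j h1 h2
    exact hξother j h1 h2
  · -- ξ i₀
    rw [hξi₀]
    congr 1
    refine Finset.sum_congr rfl fun j hj => ?_
    have : j ∈ nbrs n i₀ := hj
    rw [hξadj j (Finset.mem_filter.1 this).2]
end
end
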